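/- arXiv:1702.08664 — 2 statements merged into one kernel-verified Lean document; each statement's English description precedes it below -/
import Mathlib

section
/- Let G be a characterizable reduced lexicographic Gröbner basis, i.e., ⟨G⟩ = sat(C) where C is the W-characteristic set of ⟨G⟩, and assume all parameters of C are ordered smaller than the other variables. Then C is normal. -/
open MvPolynomial

namespace CharDec

variable {K : Type*} [Field K] {σ : Type*} [LinearOrder σ]

/-- Lexicographic comparison of exponent vectors (larger variables dominate):
`a ≤ b` iff `a = b` or at the greatest index where they differ, `a` is smaller. -/
def lexLe (a b : σ →₀ ℕ) : Prop :=
  a = b ∨ ∃ i : σ, a i < b i ∧ ∀ j : σ, i < j → a j = b j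

/-- `m` is the leading monomial of `f` with respect to the lex term ordering. -/
def IsLeadMon (f : MvPolynomial σ K) (m : σ →₀ ℕ) : Prop :=
  m ∈ f.support ∧ ∀ m' ∈ f.support, lexLe m' m

/-- `f` has leading (greatest actually occurring) variable `i`. -/
def HasLV (f : MvPolynomial σ K) (i : σ) : Prop :=
  i ∈ f.vars ∧ ∀ j ∈ f.vars, j ≤ i

/-- The coefficient of `(X i) ^ d` in `f`, as a polynomial in the remaining variables. -/
noncomputable def coeffWrt (i : σ) (d : ℕ) (f : MvPolynomial σ K) :
    MvPolynomial σ K :=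
  ∑ m ∈ f.support.filter (fun m => m i = d), monomial (m.update i 0) (f.coeff m)

/-- The initial (leading coefficient in the leading variable) of `f` with
respect to the variable `i`. -/
noncomputable def initialWrt (i : σ) (f : MvPolynomial σ K) : MvPolynomial σ K :=
  coeffWrt i (f.degreeOf i) f

/-- `R` is the pseudo-remainder of `P` on pseudo-division by `Q` with respect
to the variable `y` (classical pseudo-division, with the exponent
`deg P - deg Q + 1` when `deg P ≥ deg Q`, and `0` otherwise). -/
def IsPrem (y : σ) (Q P R : MvPolynomial σ K) : Prop :=
  ∃ A : MvPolynomial σ K,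
    (initialWrt y Q) ^ (P.degreeOf y + 1 - Q.degreeOf y) * P = A * Q + R ∧
    R.degreeOf y < Q.degreeOf y

/-- `IterPrem P L R` : `R` is the iterated pseudo-remainder of `P` by the
list `L` of pairs (leading variable, divisor), divisors being used from the
head of the list on. -/
def IterPrem : MvPolynomial σ K → List (σ × MvPolynomial σ K) →
    MvPolynomial σ K → Prop
  | P, [], R => R = P
  | P, e :: L, R => ∃ S, IsPrem e.1 e.2 P S ∧ IterPrem S L R

/-- A triangular set: a list of (leading variable, polynomial) pairs with
strictly increasing leading variables. -/
structure TriSet (K : Type*) [Field K] (σ : Type*) [LinearOrder σ] where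
  elems : List (σ × MvPolynomial σ K)
  sorted : elems.Pairwise (fun e e' => e.1 < e'.1)
  hlv : ∀ e ∈ elems, HasLV e.2 e.1

namespace TriSet

/-- The list of leading variables of a triangular set. -/
def lvs (T : TriSet K σ) : List σ := T.elems.map Prod.fst

/-- The list of polynomials of a triangular set. -/
def polys (T : TriSet K σ) : List (MvPolynomial σ K) := T.elems.map Prod.snd

/-- A variable is a parameter of `T` if it is not a leading variable of `T`. -/
def IsParam (T : TriSet K σ) (j : σ) : Prop := j ∉ T.lvs

/-- `T` is normal: every initial involves only the parameters of `T`. -/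
def Normal (T : TriSet K σ) : Prop :=
  ∀ e ∈ T.elems, ∀ j ∈ (initialWrt e.1 e.2).vars, T.IsParam j

/-- `T` is zero-dimensional: every variable is a leading variable of `T`. -/
def ZeroDim (T : TriSet K σ) : Prop := ∀ i : σ, i ∈ T.lvs

/-- The product of the initials of `T`. -/
noncomputable def prodInit (T : TriSet K σ) : MvPolynomial σ K :=
  (T.elems.map fun e => initialWrt e.1 e.2).prod

/-- The ideal generated by the polynomials of `T`. -/
noncomputable def ideal (T : TriSet K σ) : Ideal (MvPolynomial σ K) :=
  Ideal.span {p | ∃ e ∈ T.elems, p = e.2}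

end TriSet

/-- The saturation `I : J^∞` of an ideal `I` by an element `J`. -/
def satBy (I : Ideal (MvPolynomial σ K)) (J : MvPolynomial σ K) :
    Ideal (MvPolynomial σ K) where
  carrier := {p | ∃ k : ℕ, J ^ k * p ∈ I}
  zero_mem' := ⟨0, by simp⟩
  add_mem' := by
    rintro a b ⟨k, hk⟩ ⟨l, hl⟩
    refine ⟨k + l, ?_⟩
    have h : J ^ (k + l) * (a + b) = J ^ l * (J ^ k * a) + J ^ k * (J ^ l * b) := by ring
    rw [h]
    exact add_mem (Ideal.mul_mem_left _ _ hk) (Ideal.mul_mem_left _ _ hl)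
  smul_mem' := by
    rintro c a ⟨k, hk⟩
    refine ⟨k, ?_⟩
    have h : J ^ k * (c • a) = c * (J ^ k * a) := by rw [smul_eq_mul]; ring
    rw [h]
    exact Ideal.mul_mem_left _ _ hk

namespace TriSet

/-- The saturated ideal `sat(T) = ⟨T⟩ : (∏ initials)^∞` of a triangular set. -/
noncomputable def sat (T : TriSet K σ) : Ideal (MvPolynomial σ K) :=
  satBy T.ideal T.prodInit

/-- The triangular set formed by the first `i` elements of `T`. -/
def take (T : TriSet K σ) (i : ℕ) : TriSet K σ :=
  ⟨T.elems.take i, T.sorted.sublist (List.take_sublist i T.elems),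
    fun e he => T.hlv e (List.mem_of_mem_take he)⟩

/-- `T` is a regular set: each initial is neither zero nor a zero-divisor
modulo the saturated ideal of the preceding subset. -/
def Regular (T : TriSet K σ) : Prop :=
  ∀ i : ℕ, ∀ h : i < T.elems.length,
    initialWrt (T.elems.get ⟨i, h⟩).1 (T.elems.get ⟨i, h⟩).2 ∉ (T.take i).sat ∧
    ∀ p : MvPolynomial σ K,
      initialWrt (T.elems.get ⟨i, h⟩).1 (T.elems.get ⟨i, h⟩).2 * p ∈ (T.take i).sat →
        p ∈ (T.take i).sat

end TriSet

/-- The zero set, in (the algebraic closure of `K`)^σ, of a set of polynomials. -/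
def zeroSet (S : Set (MvPolynomial σ K)) : Set (σ → AlgebraicClosure K) :=
  {x | ∀ p ∈ S, aeval x p = 0}

/-- `Zero(T / ini(T))` : the common zeros of `T` at which no initial of `T` vanishes. -/
def TriSet.zeroQuasi (T : TriSet K σ) : Set (σ → AlgebraicClosure K) :=
  {x | (∀ e ∈ T.elems, aeval x e.2 = 0) ∧
       (∀ e ∈ T.elems, aeval x (initialWrt e.1 e.2) ≠ 0)}

/-- `G` is a (finite) Gröbner basis of `I` with respect to the lex term
ordering: `G ⊆ I` and the leading monomial of every nonzero element of `I` is
divisible by the leading monomial of some element of `G`. -/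
def IsGB (G : Set (MvPolynomial σ K)) (I : Ideal (MvPolynomial σ K)) : Prop :=
  G.Finite ∧ G ⊆ ↑I ∧
  ∀ f ∈ I, f ≠ 0 → ∃ g ∈ G, ∃ mf mg, IsLeadMon f mf ∧ IsLeadMon g mg ∧ ∀ j, mg j ≤ mf j

/-- `G` is the reduced lex Gröbner basis of `I`. -/
def IsReducedGB (G : Set (MvPolynomial σ K)) (I : Ideal (MvPolynomial σ K)) : Prop :=
  IsGB G I ∧ (0 : MvPolynomial σ K) ∉ G ∧
  (∀ g ∈ G, ∀ m, IsLeadMon g m → g.coeff m = 1) ∧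
  (∀ g ∈ G, ∀ g' ∈ G, g' ≠ g → ∀ m ∈ g.support, ∀ m', IsLeadMon g' m' →
    ¬ (∀ j, m' j ≤ m j))

/-- `C` is the W-characteristic set extracted from the (reduced lex Gröbner
basis) `G`: for each leading variable occurring in `G`, `C` contains the
lex-minimal element of `G` with that leading variable. -/
def IsWCharOf (C : TriSet K σ) (G : Set (MvPolynomial σ K)) : Prop :=
  (∀ e ∈ C.elems, e.2 ∈ G ∧
    ∀ g ∈ G, HasLV g e.1 → ∀ mg me, IsLeadMon g mg → IsLeadMon e.2 me → lexLe me mg) ∧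
  (∀ g ∈ G, ∀ i : σ, HasLV g i → i ∈ C.lvs)

/-- The Sylvester-style matrix of two univariate polynomials. -/
noncomputable def sylvester {R : Type*} [CommRing R] (f g : Polynomial R) :
    Matrix (Fin (f.natDegree + g.natDegree)) (Fin (f.natDegree + g.natDegree)) R :=
  Matrix.of fun i j =>
    if (i : ℕ) < g.natDegree then
      (if (i : ℕ) ≤ (j : ℕ) then f.coeff ((j : ℕ) - (i : ℕ)) else 0)
    else
      (if (i : ℕ) - g.natDegree ≤ (j : ℕ) then g.coeff ((j : ℕ) - ((i : ℕ) - g.natDegree))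
       else 0)

/-- The resultant of two univariate polynomials, as the determinant of their
Sylvester matrix. -/
noncomputable def resultantP {R : Type*} [CommRing R] (f g : Polynomial R) : R :=
  (sylvester f g).det

/-- View a multivariate polynomial as a univariate polynomial in the variable `i`. -/
noncomputable def toUni (i : σ) (f : MvPolynomial σ K) :
    Polynomial (MvPolynomial σ K) :=
  aeval (fun j => if j = i then Polynomial.X else Polynomial.C (X j)) f

/-- The resultant of two multivariate polynomials with respect to the variable `i`. -/
noncomputable def resWrt (i : σ) (f g : MvPolynomial σ K) : MvPolynomial σ K :=
  resultantP (toUni i f) (toUni i g)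

/-- The iterated resultant of `f` with respect to a list of
(leading variable, divisor) pairs, used from the head of the list on. -/
noncomputable def iterRes : MvPolynomial σ K → List (σ × MvPolynomial σ K) →
    MvPolynomial σ K
  | f, [] => f
  | f, e :: L => iterRes (resWrt e.1 f e.2) L

section Chunk1
set_option linter.dupNamespace false
set_option linter.unusedSectionVars false

variable {K : Type*} [Field K] {σ : Type*} [LinearOrder σ]

/-! ### lexLe basics -/

lemma lexLe_refl (a : σ →₀ ℕ) : lexLe a a := Or.inl rfl

lemma lexLe_trans {a b c : σ →₀ ℕ} (h1 : lexLe a b) (h2 : lexLe b c) : lexLe a c := by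
  rcases h1 with rfl | ⟨i, hi, hia⟩
  · exact h2
  · rcases h2 with rfl | ⟨i', hi', hia'⟩
    · exact Or.inr ⟨i, hi, hia⟩
    · rcases lt_trichotomy i i' with h | rfl | h
      · refine Or.inr ⟨i', ?_, fun j hj => ?_⟩
        · rw [hia i' h]; exact hi'
        · rw [hia j (h.trans hj), hia' j hj]
      · exact Or.inr ⟨i, hi.trans hi', fun j hj => (hia j hj).trans (hia' j hj)⟩
      · refine Or.inr ⟨i, ?_, fun j hj => ?_⟩
        · rw [hia' i h] at hi; exact hi
        · rw [hia j hj, hia' j (h.trans hj)]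

lemma lexLe_total (a b : σ →₀ ℕ) : lexLe a b ∨ lexLe b a := by
  classical
  by_cases hab : a = b
  · exact Or.inl (Or.inl hab)
  · have hne : ((a.support ∪ b.support).filter (fun i => a i ≠ b i)).Nonempty := by
      have : ∃ i, a i ≠ b i := by
        by_contra h
        push_neg at h
        exact hab (Finsupp.ext h)
      rcases this with ⟨i, hi⟩
      refine ⟨i, Finset.mem_filter.mpr ⟨?_, hi⟩⟩
      rcases Decidable.eq_or_ne (a i) 0 with h0 | h0
      · exact Finset.mem_union_right _ (Finsupp.mem_support_iff.mpr (fun hb => hi (by rw [h0, hb])))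
      · exact Finset.mem_union_left _ (Finsupp.mem_support_iff.mpr h0)
    set s := (a.support ∪ b.support).filter (fun i => a i ≠ b i) with hs
    set i := s.max' hne with hidef
    have hmem : i ∈ s := s.max'_mem hne
    have hiab : a i ≠ b i := (Finset.mem_filter.mp hmem).2
    have hagree : ∀ j, i < j → a j = b j := by
      intro j hj
      by_contra hne2
      have hjs : j ∈ s := by
        refine Finset.mem_filter.mpr ⟨?_, hne2⟩
        rcases Decidable.eq_or_ne (a j) 0 with h0 | h0
        · exact Finset.mem_union_right _ (Finsupp.mem_support_iff.mpr (fun hb => hne2 (by rw [h0, hb])))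
        · exact Finset.mem_union_left _ (Finsupp.mem_support_iff.mpr h0)
      exact absurd (s.le_max' j hjs) (not_le.mpr hj)
    rcases lt_or_gt_of_ne hiab with h | h
    · exact Or.inl (Or.inr ⟨i, h, hagree⟩)
    · exact Or.inr (Or.inr ⟨i, h, fun j hj => (hagree j hj).symm⟩)

/-- If `b` vanishes above `v` and `lexLe a b`, then `a` vanishes above `v`
and `a v ≤ b v`. -/
lemma lexLe_ge_at {a b : σ →₀ ℕ} (h : lexLe a b) (v : σ)
    (hb : ∀ j, v < j → b j = 0) : (∀ j, v < j → a j = 0) ∧ a v ≤ b v := by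
  rcases h with rfl | ⟨i, hi, hia⟩
  · exact ⟨hb, le_rfl⟩
  · have hile : i ≤ v := by
      by_contra h
      push_neg at h
      rw [hb i h] at hi
      exact Nat.not_lt_zero _ hi
    constructor
    · intro j hj
      rw [hia j (lt_of_le_of_lt hile hj)]
      exact hb j hj
    · rcases eq_or_lt_of_le hile with rfl | h
      · exact hi.le
      · exact le_of_eq (hia v h)

/-! ### Leading monomials -/

lemma finset_exists_lex_max (s : Finset (σ →₀ ℕ)) (hs : s.Nonempty) :
    ∃ m ∈ s, ∀ m' ∈ s, lexLe m' m := by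
  classical
  induction hs using Finset.Nonempty.cons_induction with
  | singleton a => exact ⟨a, Finset.mem_singleton_self a, fun m' hm' => by
      rw [Finset.mem_singleton] at hm'; exact hm' ▸ lexLe_refl a⟩
  | cons a s ha hs ih =>
      rcases ih with ⟨m, hm, hmax⟩
      rcases lexLe_total a m with h | h
      · refine ⟨m, Finset.mem_cons.mpr (Or.inr hm), fun m' hm' => ?_⟩
        rcases Finset.mem_cons.mp hm' with rfl | hm'
        · exact h
        · exact hmax m' hm'
      · refine ⟨a, Finset.mem_cons_self a s, fun m' hm' => ?_⟩
        rcases Finset.mem_cons.mp hm' with rfl | hm'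
        · exact lexLe_refl m'
        · exact lexLe_trans (hmax m' hm') h

lemma exists_isLeadMon {f : MvPolynomial σ K} (hf : f ≠ 0) : ∃ m, IsLeadMon f m := by
  rcases finset_exists_lex_max f.support (MvPolynomial.support_nonempty.mpr hf) with ⟨m, hm, hmax⟩
  exact ⟨m, hm, hmax⟩

lemma supp_exp_le_degreeOf {f : MvPolynomial σ K} {m : σ →₀ ℕ} (hm : m ∈ f.support) (v : σ) :
    m v ≤ degreeOf v f :=
  degreeOf_le_iff.mp le_rfl m hm

lemma supp_exp_eq_zero_of_not_mem_vars {f : MvPolynomial σ K} {m : σ →₀ ℕ}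
    (hm : m ∈ f.support) {v : σ} (hv : v ∉ f.vars) : m v = 0 := by
  by_contra h
  exact hv ((mem_vars v).mpr ⟨m, hm, Finsupp.mem_support_iff.mpr h⟩)

lemma exists_supp_exp_eq_degreeOf {f : MvPolynomial σ K} (hf : f ≠ 0) (v : σ) :
    ∃ m ∈ f.support, m v = degreeOf v f := by
  rcases Decidable.eq_or_ne (degreeOf v f) 0 with h0 | h0
  · rcases MvPolynomial.support_nonempty.mpr hf with ⟨m, hm⟩
    exact ⟨m, hm, by have := supp_exp_le_degreeOf hm v; omega⟩
  · by_contra h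
    push_neg at h
    have : degreeOf v f ≤ degreeOf v f - 1 := by
      rw [degreeOf_le_iff]
      intro m hm
      have h1 := supp_exp_le_degreeOf hm v
      have h2 := h m hm
      omega
    omega

/-- For `f` with leading variable `v`, any lead monomial has `v`-exponent
exactly `degreeOf v f`, and vanishes above `v`. -/
lemma leadMon_top_exp {f : MvPolynomial σ K} {v : σ} (hv : HasLV f v) {m : σ →₀ ℕ}
    (hm : IsLeadMon f m) : m v = degreeOf v f ∧ ∀ j, v < j → m j = 0 := by
  have hf : f ≠ 0 := by
    intro h
    have := hv.1
    rw [h] at this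
    simp [MvPolynomial.vars_0] at this
  have hvanish : ∀ m' ∈ f.support, ∀ j, v < j → m' j = 0 := by
    intro m' hm' j hj
    exact supp_exp_eq_zero_of_not_mem_vars hm' (fun hmem => absurd (hv.2 j hmem) (not_le.mpr hj))
  refine ⟨?_, hvanish m hm.1 ⟩
  rcases exists_supp_exp_eq_degreeOf hf v with ⟨m0, hm0, hm0v⟩
  have hle := (lexLe_ge_at (hm.2 m0 hm0) v (hvanish m hm.1)).2
  have := supp_exp_le_degreeOf hm.1 v
  omega

end Chunk1
section Chunk2
set_option linter.dupNamespace false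
set_option linter.unusedSectionVars false

variable {K : Type*} [Field K] {σ : Type*} [LinearOrder σ]

/-! ### Finsupp.update helpers -/

lemma upd_apply (m : σ →₀ ℕ) (y j : σ) (v : ℕ) :
    m.update y v j = if j = y then v else m j := by
  classical
  rw [Finsupp.coe_update, Function.update_apply]

lemma upd_self (m : σ →₀ ℕ) (y : σ) (v : ℕ) : m.update y v y = v := by
  rw [upd_apply, if_pos rfl]

lemma upd_other (m : σ →₀ ℕ) {y j : σ} (h : j ≠ y) (v : ℕ) : m.update y v j = m j := by
  rw [upd_apply, if_neg h]

lemma upd_upd (m : σ →₀ ℕ) (y : σ) (v w : ℕ) :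
    (m.update y v).update y w = m.update y w := by
  ext j
  rcases Decidable.eq_or_ne j y with rfl | h
  · rw [upd_self, upd_self]
  · rw [upd_other _ h, upd_other _ h, upd_other _ h]

lemma upd_noop {m : σ →₀ ℕ} {y : σ} {v : ℕ} (h : m y = v) : m.update y v = m := by
  ext j
  rcases Decidable.eq_or_ne j y with rfl | hj
  · rw [upd_self, h]
  · rw [upd_other _ hj]

/-! ### coeffWrt toolkit -/

lemma coeff_coeffWrt (y : σ) (D : ℕ) (f : MvPolynomial σ K) (m : σ →₀ ℕ) :
    coeff m (coeffWrt y D f) = if m y = 0 then coeff (m.update y D) f else 0 := by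
  classical
  rw [coeffWrt, coeff_sum]
  by_cases hmy : m y = 0
  · rw [if_pos hmy]
    rw [Finset.sum_eq_single (m.update y D)]
    · rw [coeff_monomial, if_pos]
      ext j
      rcases Decidable.eq_or_ne j y with rfl | h
      · rw [upd_self, hmy]
      · rw [upd_other _ h, upd_other _ h]
    · intro b hb hbne
      rw [coeff_monomial, if_neg]
      intro hEq
      apply hbne
      have hby : b y = D := (Finset.mem_filter.mp hb).2
      ext j
      rcases Decidable.eq_or_ne j y with rfl | h
      · rw [upd_self, hby]
      · rw [upd_other _ h, ← hEq, upd_other _ h]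
    · intro hnotin
      have : coeff (m.update y D) f = 0 := by
        by_contra h
        exact hnotin (Finset.mem_filter.mpr ⟨mem_support_iff.mpr h, upd_self m y D⟩)
      rw [coeff_monomial, if_pos, this]
      ext j
      rcases Decidable.eq_or_ne j y with rfl | h
      · rw [upd_self, hmy]
      · rw [upd_other _ h, upd_other _ h]
  · rw [if_neg hmy]
    apply Finset.sum_eq_zero
    intro b hb
    rw [coeff_monomial, if_neg]
    intro hEq
    apply hmy
    rw [← hEq, upd_self]

lemma supp_coeffWrt {y : σ} {D : ℕ} {f : MvPolynomial σ K} {m : σ →₀ ℕ}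
    (hm : m ∈ (coeffWrt y D f).support) : m y = 0 ∧ m.update y D ∈ f.support := by
  rw [mem_support_iff, coeff_coeffWrt] at hm
  by_cases hmy : m y = 0
  · rw [if_pos hmy] at hm
    exact ⟨hmy, mem_support_iff.mpr hm⟩
  · rw [if_neg hmy] at hm
    exact absurd rfl hm

lemma coeffWrt_add (y : σ) (D : ℕ) (p q : MvPolynomial σ K) :
    coeffWrt y D (p + q) = coeffWrt y D p + coeffWrt y D q := by
  ext m
  simp only [coeff_add, coeff_coeffWrt]
  split <;> simp [coeff_add]

lemma coeffWrt_zero (y : σ) (D : ℕ) : coeffWrt y D (0 : MvPolynomial σ K) = 0 := by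
  ext m
  simp [coeff_coeffWrt]

lemma upd_sub_varfree {y : σ} {s : σ →₀ ℕ} (hsy : s y = 0) (m : σ →₀ ℕ) (D : ℕ) :
    m.update y D - s = (m - s).update y D := by
  ext j
  rcases Decidable.eq_or_ne j y with rfl | h
  · rw [Finsupp.tsub_apply, upd_self, upd_self, hsy, Nat.sub_zero]
  · rw [Finsupp.tsub_apply, upd_other _ h, upd_other _ h, Finsupp.tsub_apply]

lemma le_upd_varfree {y : σ} {s m : σ →₀ ℕ} (hsy : s y = 0) (D : ℕ) :
    s ≤ m.update y D ↔ s ≤ m := by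
  constructor <;> intro h <;> rw [Finsupp.le_def] at h ⊢ <;> intro j <;>
    rcases Decidable.eq_or_ne j y with rfl | hj
  · rw [hsy]; exact Nat.zero_le _
  · have := h j; rwa [upd_other _ hj] at this
  · rw [upd_self, hsy]; exact Nat.zero_le _
  · rw [upd_other _ hj]; exact h j

lemma coeffWrt_mul_monomial {y : σ} {s : σ →₀ ℕ} (hsy : s y = 0) (c : K)
    (D : ℕ) (p : MvPolynomial σ K) :
    coeffWrt y D (monomial s c * p) = monomial s c * coeffWrt y D p := by
  classical
  ext m
  rw [coeff_coeffWrt, mul_comm (monomial s c), mul_comm (monomial s c), coeff_mul_monomial',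
    coeff_mul_monomial']
  by_cases hmy : m y = 0
  · rw [if_pos hmy]
    by_cases hsm : s ≤ m
    · have h0 : (m - s) y = 0 := by rw [Finsupp.tsub_apply, hmy, hsy]
      rw [if_pos hsm, if_pos ((le_upd_varfree hsy D).mpr hsm), coeff_coeffWrt,
        upd_sub_varfree hsy, if_pos h0]
    · rw [if_neg hsm, if_neg (fun h => hsm ((le_upd_varfree hsy D).mp h))]
  · rw [if_neg hmy]
    by_cases hsm : s ≤ m
    · rw [if_pos hsm, coeff_coeffWrt, if_neg, zero_mul]
      rw [Finsupp.tsub_apply, hsy]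
      omega
    · rw [if_neg hsm]

lemma coeffWrt_sum {y : σ} {D : ℕ} {X : Type*} (s : Finset X) (F : X → MvPolynomial σ K) :
    coeffWrt y D (∑ x ∈ s, F x) = ∑ x ∈ s, coeffWrt y D (F x) := by
  classical
  induction s using Finset.cons_induction with
  | empty => simp [coeffWrt_zero]
  | cons a t ha ih => rw [Finset.sum_cons, Finset.sum_cons, coeffWrt_add, ih]

lemma coeffWrt_mul_varfree {y : σ} {a : MvPolynomial σ K} (ha : y ∉ a.vars)
    (D : ℕ) (p : MvPolynomial σ K) :
    coeffWrt y D (a * p) = a * coeffWrt y D p := by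
  classical
  conv_lhs => rw [← a.support_sum_monomial_coeff]
  conv_rhs => rw [← a.support_sum_monomial_coeff]
  rw [Finset.sum_mul, coeffWrt_sum, Finset.sum_mul]
  apply Finset.sum_congr rfl
  intro s hs
  exact coeffWrt_mul_monomial (supp_exp_eq_zero_of_not_mem_vars hs ha) _ _ _

lemma coeffWrt_eq_zero_of_lt {y : σ} {D : ℕ} {p : MvPolynomial σ K}
    (h : ∀ m ∈ p.support, m y < D) : coeffWrt y D p = 0 := by
  ext m
  rw [coeff_coeffWrt]
  by_cases hmy : m y = 0
  · rw [if_pos hmy, coeff_zero]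
    by_contra hc
    have hmem := mem_support_iff.mpr hc
    have := h _ hmem
    rw [upd_self] at this
    omega
  · rw [if_neg hmy, coeff_zero]

lemma coeffWrt_monomial_shift {y : σ} {D s : ℕ} (hs : s ≤ D) (p : MvPolynomial σ K) :
    coeffWrt y D (p * monomial (Finsupp.single y s) 1) = coeffWrt y (D - s) p := by
  classical
  ext m
  rw [coeff_coeffWrt, coeff_coeffWrt]
  by_cases hmy : m y = 0
  · rw [if_pos hmy, if_pos hmy, coeff_mul_monomial', if_pos]
    · rw [mul_one]
      congr 1
      ext j
      rcases Decidable.eq_or_ne j y with rfl | h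
      · rw [Finsupp.tsub_apply, upd_self, upd_self, Finsupp.single_apply, if_pos rfl]
      · rw [Finsupp.tsub_apply, upd_other _ h, upd_other _ h, Finsupp.single_apply,
          if_neg (fun hh => h hh.symm), Nat.sub_zero]
    · rw [Finsupp.le_def]
      intro j
      rcases Decidable.eq_or_ne j y with rfl | h
      · rw [Finsupp.single_apply, if_pos rfl, upd_self]; exact hs
      · rw [Finsupp.single_apply, if_neg (fun hh => h hh.symm), upd_other _ h]
        exact Nat.zero_le _
  · rw [if_neg hmy, if_neg hmy]

lemma initialWrt_ne_zero {f : MvPolynomial σ K} (hf : f ≠ 0) (y : σ) :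
    initialWrt y f ≠ 0 := by
  rcases exists_supp_exp_eq_degreeOf hf y with ⟨m, hm, hmy⟩
  intro h
  have : coeff (m.update y 0) (initialWrt y f) = coeff m f := by
    rw [initialWrt, coeff_coeffWrt, if_pos (upd_self m y 0), upd_upd, upd_noop hmy]
  rw [h, coeff_zero] at this
  exact (mem_support_iff.mp hm) this.symm

lemma supp_initialWrt {y : σ} {f : MvPolynomial σ K} {m : σ →₀ ℕ}
    (hm : m ∈ (initialWrt y f).support) :
    m y = 0 ∧ m.update y (degreeOf y f) ∈ f.support :=
  supp_coeffWrt hm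

lemma vars_initialWrt_subset {y : σ} {f : MvPolynomial σ K} {v : σ}
    (hv : v ∈ (initialWrt y f).vars) : v ∈ f.vars ∧ v ≠ y := by
  rw [mem_vars] at hv
  rcases hv with ⟨m, hm, hvm⟩
  rcases supp_initialWrt hm with ⟨hmy, hmem⟩
  have hvy : v ≠ y := by
    intro h
    rw [h] at hvm
    rw [Finsupp.mem_support_iff, hmy] at hvm
    exact hvm rfl
  constructor
  · rw [mem_vars]
    refine ⟨m.update y (degreeOf y f), hmem, ?_⟩
    rw [Finsupp.mem_support_iff, upd_other _ hvy]
    exact Finsupp.mem_support_iff.mp hvm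
  · exact hvy

/-- Decomposition: `f = initialWrt y f * X_y^deg + E` with `deg_y E < deg`. -/
lemma supp_reductum {f : MvPolynomial σ K} {y : σ} (hy : 0 < degreeOf y f) :
    ∀ m ∈ (f - initialWrt y f * monomial (Finsupp.single y (degreeOf y f)) (1:K)).support,
      m y < degreeOf y f := by
  classical
  intro m hm
  rw [mem_support_iff, coeff_sub, coeff_mul_monomial'] at hm
  by_cases hle : Finsupp.single y (degreeOf y f) ≤ m
  · rw [if_pos hle, mul_one] at hm
    have hmy : degreeOf y f ≤ m y := by
      have := Finsupp.le_def.mp hle y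
      rwa [Finsupp.single_apply, if_pos rfl] at this
    rcases Nat.lt_or_ge (m y) (degreeOf y f + 1) with hlt | hge
    · -- m y = degreeOf y f : show contradiction
      have hmyd : m y = degreeOf y f := by omega
      exfalso
      apply hm
      rw [initialWrt, coeff_coeffWrt]
      have h1 : (m - Finsupp.single y (degreeOf y f)) y = 0 := by
        rw [Finsupp.tsub_apply, Finsupp.single_apply, if_pos rfl, hmyd, Nat.sub_self]
      rw [if_pos h1, sub_eq_zero]
      congr 1
      ext j
      rcases Decidable.eq_or_ne j y with rfl | h
      · rw [upd_self, hmyd]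
      · rw [upd_other _ h, Finsupp.tsub_apply, Finsupp.single_apply,
          if_neg (fun hh => h hh.symm), Nat.sub_zero]
    · -- m y > degreeOf y f : coeff m f = 0 and initial part zero
      exfalso
      apply hm
      have h1 : coeff m f = 0 := by
        by_contra hc
        have := supp_exp_le_degreeOf (mem_support_iff.mpr hc) y
        omega
      have h2 : coeff (m - Finsupp.single y (degreeOf y f)) (initialWrt y f) = 0 := by
        rw [initialWrt, coeff_coeffWrt, if_neg]
        rw [Finsupp.tsub_apply, Finsupp.single_apply, if_pos rfl]
        omega
      rw [h1, h2, sub_zero]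
  · rw [if_neg hle, sub_zero] at hm
    have h1 := supp_exp_le_degreeOf (mem_support_iff.mpr hm) y
    rcases Nat.lt_or_ge (m y) (degreeOf y f) with hlt | hge
    · exact hlt
    · exfalso
      apply hle
      rw [Finsupp.le_def]
      intro j
      rcases Decidable.eq_or_ne j y with rfl | h
      · rw [Finsupp.single_apply, if_pos rfl]; omega
      · rw [Finsupp.single_apply, if_neg (fun hh => h hh.symm)]
        exact Nat.zero_le _

end Chunk2
section Chunk3
set_option linter.dupNamespace false
set_option linter.unusedSectionVars false

variable {K : Type*} [Field K] {σ : Type*} [LinearOrder σ]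

lemma ne_zero_of_hasLV {c : MvPolynomial σ K} {y : σ} (hc : HasLV c y) : c ≠ 0 := by
  intro h
  have := hc.1
  rw [h] at this
  simp [MvPolynomial.vars_0] at this

lemma degreeOf_pos_of_hasLV {c : MvPolynomial σ K} {y : σ} (hc : HasLV c y) :
    0 < degreeOf y c := by
  rcases (mem_vars y).mp hc.1 with ⟨m, hm, hym⟩
  have h1 := supp_exp_le_degreeOf hm y
  have h2 := Finsupp.mem_support_iff.mp hym
  omega

lemma supp_exps_y_ne {y : σ} {D : ℕ} {p : MvPolynomial σ K}
    (h : coeffWrt y D p = 0) {m : σ →₀ ℕ} (hm : m ∈ p.support) : m y ≠ D := by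
  intro hEq
  have : coeff (m.update y 0) (coeffWrt y D p) = coeff m p := by
    rw [coeff_coeffWrt, if_pos (upd_self m y 0), upd_upd, upd_noop hEq]
  rw [h, coeff_zero] at this
  exact mem_support_iff.mp hm this.symm

lemma not_mem_vars_coeffWrt (y : σ) (D : ℕ) (p : MvPolynomial σ K) :
    y ∉ (coeffWrt y D p).vars := by
  intro h
  rcases (mem_vars y).mp h with ⟨m, hm, hym⟩
  exact Finsupp.mem_support_iff.mp hym (supp_coeffWrt hm).1

lemma not_mem_vars_initialWrt (y : σ) (p : MvPolynomial σ K) :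
    y ∉ (initialWrt y p).vars := not_mem_vars_coeffWrt y _ p

lemma coeffWrt_sub (y : σ) (D : ℕ) (p q : MvPolynomial σ K) :
    coeffWrt y D (p - q) = coeffWrt y D p - coeffWrt y D q := by
  ext m
  simp only [coeff_sub, coeff_coeffWrt]
  split <;> simp

/-- One pseudo-division step. -/
lemma pd_step {y : σ} {c f : MvPolynomial σ K} (hc : HasLV c y)
    (hD : degreeOf y c ≤ degreeOf y f) :
    degreeOf y (initialWrt y c * f -
      (coeffWrt y (degreeOf y f) f * monomial (Finsupp.single y (degreeOf y f - degreeOf y c)) 1) * c)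
      < degreeOf y f ∧
    ∀ v, v ∉ c.vars → v ∉ (initialWrt y c).vars →
      degreeOf v (initialWrt y c * f -
        (coeffWrt y (degreeOf y f) f * monomial (Finsupp.single y (degreeOf y f - degreeOf y c)) 1) * c)
        ≤ degreeOf v f := by
  classical
  set D := degreeOf y f with hDdef
  set δ := degreeOf y c with hδdef
  set I := initialWrt y c with hIdef
  set f' := I * f -
      (coeffWrt y D f * monomial (Finsupp.single y (D - δ)) 1) * c with hf'def
  have hsupp : ∀ m ∈ f'.support, m y ≤ D ∧
      ∀ v, v ∉ c.vars → v ∉ I.vars → m v ≤ degreeOf v f := by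
    intro m hm
    have hm' := MvPolynomial.support_sub _ _ _ hm
    rcases Finset.mem_union.mp hm' with h | h
    · rcases Finset.mem_add.mp (support_mul _ _ h) with ⟨a, ha, b, hb, rfl⟩
      constructor
      · have h1 : a y = 0 := (supp_initialWrt ha).1
        have h2 := supp_exp_le_degreeOf hb y
        simp only [Finsupp.add_apply]
        omega
      · intro v hv1 hv2
        have h1 : a v = 0 := supp_exp_eq_zero_of_not_mem_vars ha hv2
        have h2 := supp_exp_le_degreeOf hb v
        simp only [Finsupp.add_apply]
        omega
    · rcases Finset.mem_add.mp (support_mul _ _ h) with ⟨a, ha, b, hb, rfl⟩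
      rcases Finset.mem_add.mp (support_mul _ _ ha) with ⟨a1, ha1, a2, ha2, rfl⟩
      have ha2' : a2 ∈ (monomial (Finsupp.single y (D - δ)) (1:K)).support := ha2
      rw [support_monomial, if_neg one_ne_zero, Finset.mem_singleton] at ha2'
      subst ha2'
      rcases supp_coeffWrt ha1 with ⟨ha1y, ha1mem⟩
      constructor
      · have hby := supp_exp_le_degreeOf hb y
        simp only [Finsupp.add_apply, Finsupp.single_eq_same]
        omega
      · intro v hv1 hv2
        have hvy : v ≠ y := fun h => hv1 (h ▸ hc.1)
        have hbv : b v = 0 := supp_exp_eq_zero_of_not_mem_vars hb hv1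
        have ha1v : a1 v ≤ degreeOf v f := by
          have := supp_exp_le_degreeOf ha1mem v
          rwa [upd_other _ hvy] at this
        simp only [Finsupp.add_apply, Finsupp.single_eq_of_ne hvy]
        omega
  have hslice : coeffWrt y D f' = 0 := by
    rw [hf'def, coeffWrt_sub]
    have e1 : coeffWrt y D (I * f) = I * coeffWrt y D f :=
      coeffWrt_mul_varfree (not_mem_vars_initialWrt y c) D f
    have e2 : coeffWrt y D (coeffWrt y D f * monomial (Finsupp.single y (D - δ)) 1 * c)
        = coeffWrt y D f * I := by
      have hre : coeffWrt y D f * monomial (Finsupp.single y (D - δ)) 1 * c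
          = (coeffWrt y D f * c) * monomial (Finsupp.single y (D - δ)) 1 := by ring
      have hδD : D - δ ≤ D := Nat.sub_le _ _
      rw [hre, coeffWrt_monomial_shift hδD, Nat.sub_sub_self hD,
        coeffWrt_mul_varfree (not_mem_vars_coeffWrt y D f) δ c]
      rfl
    rw [e1, e2, mul_comm I]
    exact sub_self _
  have hD1 : 1 ≤ δ := degreeOf_pos_of_hasLV hc
  constructor
  · have : degreeOf y f' ≤ D - 1 := by
      rw [degreeOf_le_iff]
      intro m hm
      have h1 := (hsupp m hm).1
      have h2 := supp_exps_y_ne hslice hm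
      omega
    omega
  · intro v hv1 hv2
    rw [degreeOf_le_iff]
    intro m hm
    exact (hsupp m hm).2 v hv1 hv2

/-- Pseudo-division by a single polynomial. -/
lemma pd1 {y : σ} {c : MvPolynomial σ K} (hc : HasLV c y) (f : MvPolynomial σ K) :
    ∃ (t : ℕ) (q r : MvPolynomial σ K),
      (initialWrt y c) ^ t * f = q * c + r ∧ degreeOf y r < degreeOf y c ∧
      ∀ v, v ∉ c.vars → v ∉ (initialWrt y c).vars → degreeOf v r ≤ degreeOf v f := by
  classical
  suffices H : ∀ (D : ℕ) (f : MvPolynomial σ K), degreeOf y f ≤ D →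
      ∃ (t : ℕ) (q r : MvPolynomial σ K),
        (initialWrt y c) ^ t * f = q * c + r ∧ degreeOf y r < degreeOf y c ∧
        ∀ v, v ∉ c.vars → v ∉ (initialWrt y c).vars → degreeOf v r ≤ degreeOf v f by
    exact H (degreeOf y f) f le_rfl
  intro D
  induction D with
  | zero =>
      intro f hf
      refine ⟨0, 0, f, by rw [pow_zero, one_mul, zero_mul, zero_add], ?_,
        fun v _ _ => le_rfl⟩
      have := degreeOf_pos_of_hasLV hc
      omega
  | succ D ih =>
      intro f hf
      by_cases hlt : degreeOf y f < degreeOf y c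
      · exact ⟨0, 0, f, by rw [pow_zero, one_mul, zero_mul, zero_add], hlt,
          fun v _ _ => le_rfl⟩
      · push_neg at hlt
        set B := coeffWrt y (degreeOf y f) f *
          monomial (Finsupp.single y (degreeOf y f - degreeOf y c)) (1:K) with hBdef
        set f' := initialWrt y c * f - B * c with hf'def
        obtain ⟨hdeg0, hother0⟩ := pd_step hc hlt
        have hdeg : degreeOf y f' < degreeOf y f := hdeg0
        have hother : ∀ v, v ∉ c.vars → v ∉ (initialWrt y c).vars →
            degreeOf v f' ≤ degreeOf v f := hother0
        rcases ih f' (by omega) with ⟨t, q, r, heq, hr, hrd⟩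
        refine ⟨t + 1, q + initialWrt y c ^ t * B, r, ?_, hr, ?_⟩
        · have hIf : initialWrt y c * f = f' + B * c := by rw [hf'def]; ring
          calc initialWrt y c ^ (t+1) * f
              = initialWrt y c ^ t * (initialWrt y c * f) := by ring
            _ = initialWrt y c ^ t * f' + initialWrt y c ^ t * (B * c) := by rw [hIf]; ring
            _ = (q + initialWrt y c ^ t * B) * c + r := by rw [heq]; ring
        · intro v hv1 hv2
          exact le_trans (hrd v hv1 hv2) (hother v hv1 hv2)

/-- Pseudo-division by a sorted triangular list. -/
lemma pdlist (l : List (σ × MvPolynomial σ K))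
    (hsort : l.Pairwise (fun a b => a.1 < b.1)) (hlv : ∀ a ∈ l, HasLV a.2 a.1)
    (f : MvPolynomial σ K) :
    ∃ h r : MvPolynomial σ K, h ≠ 0 ∧
      (∀ v ∈ h.vars, ∃ a ∈ l, v ∈ (initialWrt a.1 a.2).vars) ∧
      h * f - r ∈ Ideal.span {p | ∃ a ∈ l, p = a.2} ∧
      (∀ a ∈ l, degreeOf a.1 r < degreeOf a.1 a.2) ∧
      (∀ v, (∀ a ∈ l, v ∉ a.2.vars ∧ v ∉ (initialWrt a.1 a.2).vars) →
        degreeOf v r ≤ degreeOf v f) := by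
  classical
  induction l using List.reverseRecOn generalizing f with
  | nil =>
      refine ⟨1, f, one_ne_zero, ?_, ?_, by simp, fun v _ => le_rfl⟩
      · intro v hv
        rw [MvPolynomial.vars_one] at hv
        exact absurd hv (Finset.notMem_empty v)
      · rw [one_mul, sub_self]
        exact Ideal.zero_mem _
  | append_singleton l yc ih =>
      have hcy : HasLV yc.2 yc.1 := hlv yc (by simp)
      have hsortl : l.Pairwise (fun a b => a.1 < b.1) :=
        hsort.sublist (List.sublist_append_left l [yc])
      have hlvl : ∀ a ∈ l, HasLV a.2 a.1 := fun a ha => hlv a (by simp [ha])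
      have hlty : ∀ a ∈ l, a.1 < yc.1 := by
        intro a ha
        have := (List.pairwise_append.mp hsort).2.2
        exact this a ha yc (by simp)
      rcases pd1 hcy f with ⟨t, q, r0, heq0, hr0, hd0⟩
      rcases ih hsortl hlvl r0 with ⟨h1, r1, hne1, hvars1, hmem1, hred1, hdeg1⟩
      have hcne : yc.2 ≠ 0 := ne_zero_of_hasLV hcy
      refine ⟨h1 * initialWrt yc.1 yc.2 ^ t, r1,
        mul_ne_zero hne1 (pow_ne_zero _ (initialWrt_ne_zero hcne yc.1)), ?_, ?_, ?_, ?_⟩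
      · intro v hv
        rcases Finset.mem_union.mp (vars_mul _ _ hv) with h | h
        · rcases hvars1 v h with ⟨a, ha, hva⟩
          exact ⟨a, by simp [ha], hva⟩
        · exact ⟨yc, by simp, MvPolynomial.vars_pow _ _ h⟩
      · have key : h1 * initialWrt yc.1 yc.2 ^ t * f - r1
            = h1 * q * yc.2 + (h1 * r0 - r1) := by
          have : initialWrt yc.1 yc.2 ^ t * f = q * yc.2 + r0 := heq0
          calc h1 * initialWrt yc.1 yc.2 ^ t * f - r1
              = h1 * (initialWrt yc.1 yc.2 ^ t * f) - r1 := by ring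
            _ = h1 * (q * yc.2 + r0) - r1 := by rw [this]
            _ = h1 * q * yc.2 + (h1 * r0 - r1) := by ring
        rw [key]
        apply Ideal.add_mem
        · exact Ideal.mul_mem_left _ _ (Ideal.subset_span ⟨yc, by simp, rfl⟩)
        · refine Ideal.span_mono ?_ hmem1
          rintro p ⟨a, ha, rfl⟩
          exact ⟨a, by simp [ha], rfl⟩
      · intro a ha
        rcases List.mem_append.mp ha with h | h
        · exact hred1 a h
        · rw [List.mem_singleton] at h
          rw [h]
          have hyvars : ∀ a' ∈ l, yc.1 ∉ a'.2.vars ∧ yc.1 ∉ (initialWrt a'.1 a'.2).vars := by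
            intro a' ha'
            have hlt := hlty a' ha'
            constructor
            · intro hmem
              exact absurd ((hlvl a' ha').2 _ hmem) (not_le.mpr hlt)
            · intro hmem
              exact absurd ((hlvl a' ha').2 _ (vars_initialWrt_subset hmem).1) (not_le.mpr hlt)
          calc degreeOf yc.1 r1 ≤ degreeOf yc.1 r0 := hdeg1 _ hyvars
            _ < degreeOf yc.1 yc.2 := hr0
      · intro v hv
        have hvl : ∀ a ∈ l, v ∉ a.2.vars ∧ v ∉ (initialWrt a.1 a.2).vars :=
          fun a ha => hv a (by simp [ha])
        have hvy := hv yc (by simp)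
        exact le_trans (hdeg1 v hvl) (hd0 v hvy.1 hvy.2)

end Chunk3
section Chunk4
set_option linter.dupNamespace false
set_option linter.unusedSectionVars false

variable {K : Type*} [Field K] {σ : Type*} [LinearOrder σ]

/-- Iterated extraction of coefficients. -/
noncomputable def sliceL (l : List (σ × ℕ)) (p : MvPolynomial σ K) : MvPolynomial σ K :=
  l.foldr (fun yd acc => coeffWrt yd.1 yd.2 acc) p

/-- Iterated overwriting of exponents. -/
noncomputable def owList (l : List (σ × ℕ)) (m : σ →₀ ℕ) : σ →₀ ℕ :=
  l.foldr (fun yd acc => acc.update yd.1 yd.2) m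

lemma owList_apply_notin {l : List (σ × ℕ)} {j : σ} (hj : j ∉ l.map Prod.fst) (m : σ →₀ ℕ) :
    owList l m j = m j := by
  induction l with
  | nil => rfl
  | cons yd l' ih =>
      have hj1 : j ≠ yd.1 := fun h => hj (by simp [h])
      have hj2 : j ∉ l'.map Prod.fst := fun h => hj (by simp [h])
      show (owList l' m).update yd.1 yd.2 j = m j
      rw [upd_other _ hj1, ih hj2]

lemma owList_apply_mem {l : List (σ × ℕ)} (hnd : (l.map Prod.fst).Nodup)
    {yd : σ × ℕ} (hyd : yd ∈ l) (m : σ →₀ ℕ) : owList l m yd.1 = yd.2 := by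
  induction l with
  | nil => exact absurd hyd List.not_mem_nil
  | cons a l' ih =>
      rcases List.mem_cons.mp hyd with rfl | h
      · show (owList l' m).update yd.1 yd.2 yd.1 = yd.2
        exact upd_self _ _ _
      · have ha : a.1 ∉ l'.map Prod.fst := (List.nodup_cons.mp hnd).1
        have hne : yd.1 ≠ a.1 := by
          intro hEq
          exact ha (hEq ▸ List.mem_map_of_mem (f := Prod.fst) h)
        show (owList l' m).update a.1 a.2 yd.1 = yd.2
        rw [upd_other _ hne, ih (List.nodup_cons.mp hnd).2 h]

lemma owList_update_comm {l : List (σ × ℕ)} {y : σ} (hy : y ∉ l.map Prod.fst)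
    (m : σ →₀ ℕ) (v : ℕ) : owList l (m.update y v) = (owList l m).update y v := by
  induction l with
  | nil => rfl
  | cons a l' ih =>
      have hy1 : y ≠ a.1 := fun h => hy (by simp [h])
      have hy2 : y ∉ l'.map Prod.fst := fun h => hy (by simp [h])
      show (owList l' (m.update y v)).update a.1 a.2 = ((owList l' m).update a.1 a.2).update y v
      rw [ih hy2]
      ext j
      rcases Decidable.eq_or_ne j a.1 with rfl | hja
      · rw [upd_self, upd_other _ (Ne.symm hy1), upd_self]
      · rw [upd_other _ hja]
        rcases Decidable.eq_or_ne j y with rfl | hjy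
        · rw [upd_self, upd_self]
        · rw [upd_other _ hjy, upd_other _ hjy, upd_other _ hja]

lemma sliceL_coeff {l : List (σ × ℕ)} (hnd : (l.map Prod.fst).Nodup)
    (p : MvPolynomial σ K) (m : σ →₀ ℕ) :
    coeff m (sliceL l p) =
      if ∀ yd ∈ l, m yd.1 = 0 then coeff (owList l m) p else 0 := by
  induction l generalizing m with
  | nil => simp [sliceL, owList]
  | cons a l' ih =>
      have hnd' : (l'.map Prod.fst).Nodup := (List.nodup_cons.mp hnd).2
      have ha : a.1 ∉ l'.map Prod.fst := (List.nodup_cons.mp hnd).1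
      show coeff m (coeffWrt a.1 a.2 (sliceL l' p)) = _
      rw [coeff_coeffWrt]
      by_cases hma : m a.1 = 0
      · rw [if_pos hma, ih hnd']
        have hagree : ∀ yd ∈ l', (m.update a.1 a.2) yd.1 = m yd.1 := by
          intro yd hyd
          apply upd_other
          intro hEq
          exact ha (hEq ▸ List.mem_map_of_mem (f := Prod.fst) hyd)
        by_cases hall : ∀ yd ∈ l', m yd.1 = 0
        · rw [if_pos (fun yd hyd => (hagree yd hyd).trans (hall yd hyd)),
            if_pos (fun yd hyd => by
              rcases List.mem_cons.mp hyd with rfl | h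
              · exact hma
              · exact hall yd h)]
          congr 1
          show owList l' (m.update a.1 a.2) = (owList l' m).update a.1 a.2
          exact owList_update_comm ha m a.2
        · rw [if_neg, if_neg]
          · intro hcon
            exact hall (fun yd hyd => hcon yd (List.mem_cons_of_mem a hyd))
          · intro hcon
            apply hall
            intro yd hyd
            rw [← hagree yd hyd]
            exact hcon yd hyd
      · rw [if_neg hma, if_neg]
        intro hcon
        exact hma (hcon a List.mem_cons_self)

lemma supp_sliceL {l : List (σ × ℕ)} (hnd : (l.map Prod.fst).Nodup)
    {p : MvPolynomial σ K} {m : σ →₀ ℕ} (hm : m ∈ (sliceL l p).support) :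
    (∀ yd ∈ l, m yd.1 = 0) ∧ owList l m ∈ p.support := by
  rw [mem_support_iff, sliceL_coeff hnd] at hm
  by_cases h : ∀ yd ∈ l, m yd.1 = 0
  · rw [if_pos h] at hm
    exact ⟨h, mem_support_iff.mpr hm⟩
  · rw [if_neg h] at hm
    exact absurd rfl hm

lemma sliceL_add (l : List (σ × ℕ)) (p q : MvPolynomial σ K) :
    sliceL l (p + q) = sliceL l p + sliceL l q := by
  induction l with
  | nil => rfl
  | cons a l' ih =>
      show coeffWrt a.1 a.2 (sliceL l' (p + q)) = _
      rw [ih, coeffWrt_add]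
      rfl

lemma sliceL_zero (l : List (σ × ℕ)) : sliceL l (0 : MvPolynomial σ K) = 0 := by
  induction l with
  | nil => rfl
  | cons a l' ih =>
      show coeffWrt a.1 a.2 (sliceL l' 0) = 0
      rw [ih, coeffWrt_zero]

lemma sliceL_sum (l : List (σ × ℕ)) {X : Type*} (s : Finset X)
    (F : X → MvPolynomial σ K) :
    sliceL l (∑ x ∈ s, F x) = ∑ x ∈ s, sliceL l (F x) := by
  classical
  induction s using Finset.cons_induction with
  | empty => simp [sliceL_zero]
  | cons a t ha ih => rw [Finset.sum_cons, Finset.sum_cons, sliceL_add, ih]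

lemma sliceL_mul_varfree {l : List (σ × ℕ)} {a : MvPolynomial σ K}
    (ha : ∀ yd ∈ l, yd.1 ∉ a.vars) (p : MvPolynomial σ K) :
    sliceL l (a * p) = a * sliceL l p := by
  induction l with
  | nil => rfl
  | cons b l' ih =>
      show coeffWrt b.1 b.2 (sliceL l' (a * p)) = a * sliceL (b :: l') p
      rw [ih (fun yd hyd => ha yd (List.mem_cons_of_mem b hyd)),
        coeffWrt_mul_varfree (ha b List.mem_cons_self)]
      rfl

end Chunk4
section Chunk5
set_option linter.dupNamespace false
set_option linter.unusedSectionVars false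

variable {K : Type*} [Field K] {σ : Type*} [LinearOrder σ]

variable {k : ℕ} {y : Fin k → σ} {δ : Fin k → ℕ}

/-- The monomial exponent associated to a tuple of bounded exponents. -/
noncomputable def monoOf (y : Fin k → σ) (δ : Fin k → ℕ) (v : ∀ i, Fin (δ i)) : σ →₀ ℕ :=
  ∑ i : Fin k, Finsupp.single (y i) (v i : ℕ)

/-- The associated list of (variable, exponent) pairs. -/
noncomputable def lOf (y : Fin k → σ) (δ : Fin k → ℕ) (v : ∀ i, Fin (δ i)) : List (σ × ℕ) :=
  List.ofFn (fun i => (y i, (v i : ℕ)))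

lemma lOf_map_fst (v : ∀ i, Fin (δ i)) : (lOf y δ v).map Prod.fst = List.ofFn y := by
  rw [lOf, List.map_ofFn]
  rfl

lemma lOf_nodup (hinj : Function.Injective y) (v : ∀ i, Fin (δ i)) :
    ((lOf y δ v).map Prod.fst).Nodup := by
  rw [lOf_map_fst, List.nodup_ofFn]
  exact hinj

lemma monoOf_apply_y (hinj : Function.Injective y) (v : ∀ i, Fin (δ i)) (i₀ : Fin k) :
    monoOf y δ v (y i₀) = (v i₀ : ℕ) := by
  rw [monoOf, Finsupp.finset_sum_apply]
  rw [Finset.sum_eq_single i₀]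
  · rw [Finsupp.single_eq_same]
  · intro i _ hne
    exact Finsupp.single_eq_of_ne' (fun h => hne (hinj h))
  · intro h
    exact absurd (Finset.mem_univ i₀) h

lemma monoOf_apply_notin {j : σ} (hj : ∀ i, y i ≠ j) (v : ∀ i, Fin (δ i)) :
    monoOf y δ v j = 0 := by
  rw [monoOf, Finsupp.finset_sum_apply]
  apply Finset.sum_eq_zero
  intro i _
  exact Finsupp.single_eq_of_ne' (hj i)

lemma eq_of_le_and_slicecond (hinj : Function.Injective y) {v : ∀ i, Fin (δ i)}
    {m : σ →₀ ℕ} (h1 : monoOf y δ v ≤ m)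
    (h2 : ∀ yd ∈ lOf y δ v, (m - monoOf y δ v) yd.1 = 0) (i : Fin k) :
    (v i : ℕ) = m (y i) := by
  have hle : (v i : ℕ) ≤ m (y i) := by
    have := Finsupp.le_def.mp h1 (y i)
    rwa [monoOf_apply_y hinj] at this
  have hz0 := h2 (y i, (v i : ℕ)) (by rw [lOf, List.mem_ofFn]; exact ⟨i, rfl⟩)
  have hz : (m - monoOf y δ v) (y i) = 0 := hz0
  rw [Finsupp.tsub_apply, monoOf_apply_y hinj] at hz
  omega

/-- Reconstruction of a degree-reduced polynomial from its slices. -/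
lemma recon (hinj : Function.Injective y) (p : MvPolynomial σ K)
    (hred : ∀ m ∈ p.support, ∀ i, m (y i) < δ i) :
    p = ∑ v : (∀ i, Fin (δ i)), sliceL (lOf y δ v) p * monomial (monoOf y δ v) 1 := by
  classical
  ext m
  rw [coeff_sum]
  by_cases hA : ∀ i, m (y i) < δ i
  · rw [Finset.sum_eq_single (fun i => (⟨m (y i), hA i⟩ : Fin (δ i)))]
    · set v : ∀ i, Fin (δ i) := fun i => (⟨m (y i), hA i⟩ : Fin (δ i)) with hv
      have hle : monoOf y δ v ≤ m := by
        rw [Finsupp.le_def]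
        intro j
        by_cases hj : ∃ i, y i = j
        · rcases hj with ⟨i, rfl⟩
          rw [monoOf_apply_y hinj]
        · push_neg at hj
          rw [monoOf_apply_notin hj]
          exact Nat.zero_le _
      rw [coeff_mul_monomial', if_pos hle, sliceL_coeff (lOf_nodup hinj v), if_pos, mul_one]
      · congr 1
        ext j
        by_cases hj : ∃ i, y i = j
        · rcases hj with ⟨i, rfl⟩
          rw [owList_apply_mem (lOf_nodup hinj v) (show ((y i, (v i : ℕ)) : σ × ℕ) ∈ lOf y δ v by
            rw [lOf, List.mem_ofFn]; exact ⟨i, rfl⟩)]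
        · push_neg at hj
          have hnotin : j ∉ (lOf y δ v).map Prod.fst := by
            rw [lOf_map_fst, List.mem_ofFn]
            rintro ⟨i, rfl⟩
            exact hj i rfl
          rw [owList_apply_notin hnotin, Finsupp.tsub_apply, monoOf_apply_notin hj,
            Nat.sub_zero]
      · intro yd hyd
        rw [lOf, List.mem_ofFn] at hyd
        rcases hyd with ⟨i, rfl⟩
        rw [Finsupp.tsub_apply, monoOf_apply_y hinj]
        show m (y i) - (v i : ℕ) = 0
        have : (v i : ℕ) = m (y i) := rfl
        omega
    · intro v _ hvne
      rw [coeff_mul_monomial']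
      by_cases h1 : monoOf y δ v ≤ m
      · rw [if_pos h1, sliceL_coeff (lOf_nodup hinj v)]
        by_cases h2 : ∀ yd ∈ lOf y δ v, (m - monoOf y δ v) yd.1 = 0
        · exfalso
          apply hvne
          funext i
          have := eq_of_le_and_slicecond hinj h1 h2 i
          exact Fin.ext this
        · rw [if_neg h2, zero_mul]
      · rw [if_neg h1]
    · intro h
      exact absurd (Finset.mem_univ _) h
  · push_neg at hA
    rcases hA with ⟨i₀, hi₀⟩
    have hcm : coeff m p = 0 := by
      by_contra hc
      have := hred m (mem_support_iff.mpr hc) i₀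
      omega
    rw [hcm]
    symm
    apply Finset.sum_eq_zero
    intro v _
    rw [coeff_mul_monomial']
    by_cases h1 : monoOf y δ v ≤ m
    · rw [if_pos h1, sliceL_coeff (lOf_nodup hinj v)]
      by_cases h2 : ∀ yd ∈ lOf y δ v, (m - monoOf y δ v) yd.1 = 0
      · exfalso
        have := eq_of_le_and_slicecond hinj h1 h2 i₀
        have hvlt := (v i₀).2
        omega
      · rw [if_neg h2, zero_mul]
    · rw [if_neg h1]

end Chunk5
section Chunk6
set_option linter.dupNamespace false
set_option linter.unusedSectionVars false

variable {K : Type*} [Field K] {σ : Type*} [LinearOrder σ]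

lemma mem_satBy {I : Ideal (MvPolynomial σ K)} {J p : MvPolynomial σ K} :
    p ∈ satBy I J ↔ ∃ k : ℕ, J ^ k * p ∈ I := Iff.rfl

lemma degreeOf_eq_zero_of_not_mem_vars {p : MvPolynomial σ K} {v : σ} (h : v ∉ p.vars) :
    degreeOf v p = 0 := by
  have : degreeOf v p ≤ 0 := by
    rw [degreeOf_le_iff]
    intro m hm
    rw [supp_exp_eq_zero_of_not_mem_vars hm h]
  omega

lemma coeffWrt_zero_varfree {y : σ} {p : MvPolynomial σ K} (h : y ∉ p.vars) :
    coeffWrt y 0 p = p := by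
  ext m
  rw [coeff_coeffWrt]
  by_cases hmy : m y = 0
  · rw [if_pos hmy, upd_noop hmy]
  · rw [if_neg hmy]
    symm
    by_contra hc
    exact hmy (supp_exp_eq_zero_of_not_mem_vars (mem_support_iff.mpr hc) h)

lemma vars_prod_subset {X : Type*} (s : Finset X) (F : X → MvPolynomial σ K) :
    ∀ w ∈ (∏ x ∈ s, F x).vars, ∃ x ∈ s, w ∈ (F x).vars := by
  classical
  induction s using Finset.cons_induction with
  | empty => simp [MvPolynomial.vars_one]
  | cons a t ha ih =>
      intro w hw
      rw [Finset.prod_cons] at hw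
      rcases Finset.mem_union.mp (vars_mul _ _ hw) with h | h
      · exact ⟨a, Finset.mem_cons_self a t, h⟩
      · rcases ih w h with ⟨x, hx, hwx⟩
        exact ⟨x, Finset.mem_cons.mpr (Or.inr hx), hwx⟩

lemma TriSet.fst_inj (C : TriSet K σ) {a b : σ × MvPolynomial σ K}
    (ha : a ∈ C.elems) (hb : b ∈ C.elems) (h : a.1 = b.1) : a = b := by
  obtain ⟨ia, hga⟩ := List.mem_iff_get.mp ha
  obtain ⟨ib, hgb⟩ := List.mem_iff_get.mp hb
  have hstrict := List.pairwise_iff_get.mp C.sorted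
  rcases lt_trichotomy ia ib with hlt | hEq | hlt
  · have := hstrict ia ib hlt
    rw [hga, hgb, h] at this
    exact absurd this (lt_irrefl _)
  · rw [← hga, ← hgb, hEq]
  · have := hstrict ib ia hlt
    rw [hga, hgb, h] at this
    exact absurd this (lt_irrefl _)

end Chunk6

end CharDec

open CharDec MvPolynomial

set_option maxHeartbeats 6400000
set_option synthInstance.maxHeartbeats 1000000

/-- Let `G` be a characterizable reduced lex Gröbner basis,
i.e. `⟨G⟩ = sat(C)` where `C` is the W-characteristic set of `⟨G⟩`, and
assume the parameters of `C` are all smaller than the other variables. Then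
`C` is normal. -/
theorem stmt_11 {K : Type*} [Field K] {n : ℕ}
    (G : Set (MvPolynomial (Fin n) K)) (C : TriSet K (Fin n))
    (hG : IsReducedGB G (Ideal.span G)) (hC : IsWCharOf C G)
    (hchar : Ideal.span G = C.sat)
    (hord : ∀ j : Fin n, C.IsParam j → ∀ e ∈ C.elems, j < e.1) :
    C.Normal := by
  classical
  by_contra hnot
  unfold TriSet.Normal at hnot
  push_neg at hnot
  -- minimal counterexample index
  have hbad : ∃ i : ℕ, ∃ h : i < C.elems.length,
      ∃ j ∈ (initialWrt (C.elems.get ⟨i, h⟩).1 (C.elems.get ⟨i, h⟩).2).vars,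
        ¬ C.IsParam j := by
    obtain ⟨e, he, j, hj, hjp⟩ := hnot
    obtain ⟨m, hm⟩ := List.mem_iff_get.mp he
    exact ⟨m.1, m.2, j, by rw [show C.elems.get ⟨m.1, m.2⟩ = e from hm]; exact hj,
      hjp⟩
  set idx := Nat.find hbad with hidxdef
  obtain ⟨hidxlt, j, hjvars, hjnp⟩ := Nat.find_spec hbad
  replace hidxlt : idx < C.elems.length := hidxlt
  have hmin := fun (i : ℕ) (hi : i < idx) => Nat.find_min hbad hi
  set e := C.elems.get ⟨idx, hidxlt⟩ with hedef
  have heC : e ∈ C.elems := by rw [hedef]; exact List.get_mem _ _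
  have heG : e.2 ∈ G := (hC.1 e heC).1
  have hHasLV : HasLV e.2 e.1 := C.hlv e heC
  have hFne : e.2 ≠ 0 := ne_zero_of_hasLV hHasLV
  set d := degreeOf e.1 e.2 with hddef
  have hd1 : 0 < d := degreeOf_pos_of_hasLV hHasLV
  set I := initialWrt e.1 e.2 with hIdef
  have hIne : I ≠ 0 := initialWrt_ne_zero hFne e.1
  have hIvars : ∀ w ∈ I.vars, w ∈ e.2.vars ∧ w ≠ e.1 := fun w hw => vars_initialWrt_subset hw
  have hIvars_lt : ∀ w ∈ I.vars, w < e.1 := by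
    intro w hw
    rcases hIvars w hw with ⟨h1, h2⟩
    exact lt_of_le_of_ne (hHasLV.2 w h1) h2
  have hjlt : j < e.1 := hIvars_lt j hjvars
  have hstrict : ∀ (a b : Fin C.elems.length), a < b →
      (C.elems.get a).1 < (C.elems.get b).1 := List.pairwise_iff_get.mp C.sorted
  -- the prefix
  set TL := C.elems.take idx with hTLdef
  have hTLlen : TL.length = idx := by
    rw [hTLdef, List.length_take]
    omega
  have hTLlt : ∀ t : Fin TL.length, t.1 < C.elems.length := by
    intro t
    have h1 := t.2
    omega
  have hTLget : ∀ (t : Fin TL.length), TL.get t = C.elems.get ⟨t.1, hTLlt t⟩ := by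
    intro t
    simp only [List.get_eq_getElem]
    exact List.getElem_take
  have hTLsub : ∀ a ∈ TL, a ∈ C.elems := fun a ha => List.mem_of_mem_take ha
  have hTLsorted : TL.Pairwise (fun a b => a.1 < b.1) :=
    C.sorted.sublist (List.take_sublist idx C.elems)
  have hTLhlv : ∀ a ∈ TL, HasLV a.2 a.1 := fun a ha => C.hlv a (hTLsub a ha)
  have hTL_lt : ∀ a ∈ TL, a.1 < e.1 := by
    intro a ha
    obtain ⟨t, hgt⟩ := List.mem_iff_get.mp ha
    have h2 : t.1 < idx := by have := t.2; omega
    have h3 := hstrict ⟨t.1, hTLlt t⟩ ⟨idx, hidxlt⟩ (by exact h2)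
    rw [← hedef, ← hTLget t, hgt] at h3
    exact h3
  have hTL_mem : ∀ a ∈ C.elems, a.1 < e.1 → a ∈ TL := by
    intro a ha hlt
    obtain ⟨s, hgs⟩ := List.mem_iff_get.mp ha
    have hslt : s.1 < idx := by
      rcases lt_trichotomy s.1 idx with h | h | h
      · exact h
      · exfalso
        have hse : a = e := by
          rw [← hgs, hedef]
          congr 1
          exact Fin.ext h
        rw [hse] at hlt
        exact lt_irrefl _ hlt
      · exfalso
        have h2 := hstrict ⟨idx, hidxlt⟩ s (by exact h)
        rw [← hedef, hgs] at h2
        exact absurd h2 (not_lt.mpr (le_of_lt hlt))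
    rw [List.mem_iff_get]
    have hs2 : s.1 < TL.length := by omega
    refine ⟨⟨s.1, hs2⟩, ?_⟩
    rw [hTLget ⟨s.1, hs2⟩, ← hgs]
  have hTLnormal : ∀ a ∈ TL, ∀ w ∈ (initialWrt a.1 a.2).vars, C.IsParam w := by
    intro a ha w hw
    obtain ⟨t, hgt⟩ := List.mem_iff_get.mp ha
    have h2 : t.1 < idx := by have := t.2; omega
    have hnv := hmin t.1 h2
    push_neg at hnv
    have hlt : t.1 < C.elems.length := by omega
    have : a = C.elems.get ⟨t.1, hlt⟩ := by rw [← hgt, hTLget t]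
    by_contra hcp
    exact hcp (hnv hlt w (by rw [← this]; exact hw))
  -- variable classification
  have hlv_elem : ∀ w : Fin n, ¬ C.IsParam w → ∃ a ∈ C.elems, a.1 = w := by
    intro w hw
    rw [TriSet.IsParam, not_not, TriSet.lvs, List.mem_map] at hw
    exact hw
  have hparam_lt : ∀ w, C.IsParam w → w < e.1 := fun w hw => hord w hw e heC
  -- prefix data
  set k0 := TL.length with hk0def
  set yv : Fin k0 → Fin n := fun i => (TL.get i).1 with hyvdef
  set cp : Fin k0 → MvPolynomial (Fin n) K := fun i => (TL.get i).2 with hcpdef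
  set δf : Fin k0 → ℕ := fun i => degreeOf (yv i) (cp i) with hδfdef
  have hTLget_mem : ∀ i : Fin k0, TL.get i ∈ TL := fun i => List.get_mem _ _
  have hstrictTL := List.pairwise_iff_get.mp hTLsorted
  have hyinj : Function.Injective yv := by
    intro a b hab
    by_contra hne
    rcases lt_or_gt_of_ne hne with h | h
    · have h2 : yv a < yv b := hstrictTL a b h
      rw [hab] at h2
      exact absurd h2 (lt_irrefl _)
    · have h2 : yv b < yv a := hstrictTL b a h
      rw [hab] at h2
      exact absurd h2 (lt_irrefl _)
  have hδpos : ∀ i, 0 < δf i := fun i => degreeOf_pos_of_hasLV (hTLhlv _ (hTLget_mem i))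
  have hyv_lt : ∀ i, yv i < e.1 := fun i => hTL_lt _ (hTLget_mem i)
  have hyv_np : ∀ i, ¬ C.IsParam (yv i) := by
    intro i hp
    exact hp (List.mem_map.mpr ⟨TL.get i, hTLsub _ (hTLget_mem i), rfl⟩)
  -- ideal inclusions
  have hsatJ : ∀ p : MvPolynomial (Fin n) K,
      (∃ k : ℕ, C.prodInit ^ k * p ∈ C.ideal) → p ∈ Ideal.span G := by
    intro p hp
    rw [hchar]
    exact mem_satBy.mpr hp
  have hCideal_J : C.ideal ≤ Ideal.span G := fun p hp =>
    hsatJ p ⟨0, by rwa [pow_zero, one_mul]⟩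
  set spanTL : Ideal (MvPolynomial (Fin n) K) :=
    Ideal.span {p | ∃ a ∈ TL, p = a.2} with hspanTLdef
  have hspanTL_C : spanTL ≤ C.ideal := Ideal.span_mono (by
    rintro p ⟨a, ha, rfl⟩
    exact ⟨a, hTLsub a ha, rfl⟩)
  have hspanTL_J : spanTL ≤ Ideal.span G := le_trans hspanTL_C hCideal_J
  have huntouched : ∀ v : Fin n, e.1 ≤ v → ∀ a ∈ TL,
      v ∉ a.2.vars ∧ v ∉ (initialWrt a.1 a.2).vars := by
    intro v hv a ha
    have h1 : ∀ w ∈ a.2.vars, w < e.1 := fun w hw =>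
      lt_of_le_of_lt ((hTLhlv a ha).2 w hw) (hTL_lt a ha)
    constructor
    · intro hmem
      exact absurd (h1 v hmem) (not_lt.mpr hv)
    · intro hmem
      exact absurd (h1 v (vars_initialWrt_subset hmem).1) (not_lt.mpr hv)
  -- reduction modulo the prefix
  have reduce : ∀ f : MvPolynomial (Fin n) K, ∃ h r : MvPolynomial (Fin n) K, h ≠ 0 ∧
      (∀ w ∈ h.vars, C.IsParam w) ∧ h * f - r ∈ spanTL ∧
      (∀ m ∈ r.support, ∀ i : Fin k0, m (yv i) < δf i) ∧
      (∀ v : Fin n, (∀ a ∈ TL, v ∉ a.2.vars ∧ v ∉ (initialWrt a.1 a.2).vars) →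
        degreeOf v r ≤ degreeOf v f) := by
    intro f
    rcases pdlist TL hTLsorted hTLhlv f with ⟨h, r, hne, hvars, hmem, hred, hdeg⟩
    refine ⟨h, r, hne, ?_, hmem, ?_, hdeg⟩
    · intro w hw
      rcases hvars w hw with ⟨a, ha, hwa⟩
      exact hTLnormal a ha w hwa
    · intro m hm i
      have h1 := hred (TL.get i) (hTLget_mem i)
      have h2 := supp_exp_le_degreeOf hm (yv i)
      have h1' : degreeOf (yv i) r < δf i := h1
      omega
  -- Groebner divisor analysis
  have gbdiv : ∀ f ∈ Ideal.span G, f ≠ 0 → ∃ g ∈ G, ∃ v : Fin n, HasLV g v ∧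
      ∃ ev ∈ C.elems, ev.1 = v ∧ ∃ mg mf, IsLeadMon g mg ∧ IsLeadMon f mf ∧
      (∀ w, mg w ≤ mf w) ∧ degreeOf v ev.2 ≤ mg v := by
    intro f hf hfne
    obtain ⟨g, hg, mf, mg, hmf, hmg, hdvd⟩ := hG.1.2.2 f hf hfne
    have hgne : g ≠ 0 := fun h => hG.2.1 (h ▸ hg)
    have hvars_ne : g.vars.Nonempty := by
      by_contra hempty
      rw [Finset.not_nonempty_iff_eq_empty] at hempty
      have hmg0 : ∀ w, mg w = 0 := fun w =>
        supp_exp_eq_zero_of_not_mem_vars hmg.1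
          (by rw [hempty]; exact Finset.notMem_empty w)
      obtain ⟨mF, hmF⟩ := MvPolynomial.support_nonempty.mpr hFne
      have hne2 : g ≠ e.2 := by
        intro hEq
        have := hHasLV.1
        rw [← hEq, hempty] at this
        exact Finset.notMem_empty _ this
      exact hG.2.2.2 e.2 heG g hg hne2 mF hmF mg hmg
        (fun w => by rw [hmg0 w]; exact Nat.zero_le _)
    set v := g.vars.max' hvars_ne with hvdef
    have hgv : HasLV g v := ⟨g.vars.max'_mem hvars_ne, fun w hw => g.vars.le_max' w hw⟩
    have hvlvs := hC.2 g hg v hgv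
    obtain ⟨ev, hev, hev1⟩ : ∃ a ∈ C.elems, a.1 = v := List.mem_map.mp hvlvs
    have hevG : ev.2 ∈ G := (hC.1 ev hev).1
    have hevne : ev.2 ≠ 0 := fun h => hG.2.1 (h ▸ hevG)
    obtain ⟨me, hme⟩ := exists_isLeadMon hevne
    have hlex : lexLe me mg := (hC.1 ev hev).2 g hg (hev1 ▸ hgv) mg me hmg hme
    have hevlv : HasLV ev.2 ev.1 := C.hlv ev hev
    have htop := leadMon_top_exp hevlv hme
    have hvanish : ∀ w, v < w → mg w = 0 := by
      intro w hw
      apply supp_exp_eq_zero_of_not_mem_vars hmg.1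
      intro hmem
      exact absurd (hgv.2 w hmem) (not_le.mpr hw)
    have hgeat := lexLe_ge_at hlex v hvanish
    refine ⟨g, hg, v, hgv, ev, hev, hev1, mg, mf, hmg, hmf, hdvd, ?_⟩
    have h2 : me v = degreeOf v ev.2 := by rw [← hev1]; exact htop.1
    rw [← h2]
    exact hgeat.2
  -- indexed monomials
  set xB : (∀ i : Fin k0, Fin (δf i)) → MvPolynomial (Fin n) K :=
    fun β => monomial (monoOf yv δf β) 1 with hxBdef
  -- reduce each I * xβ
  have hIx := fun β => reduce (I * xB β)
  choose Hb ρ hHbne hHbvars hHbmem hρred hρdeg using hIx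
  set H : MvPolynomial (Fin n) K := ∏ β : (∀ i : Fin k0, Fin (δf i)), Hb β with hHdef
  have hHne : H ≠ 0 := Finset.prod_ne_zero_iff.mpr (fun β _ => hHbne β)
  have hHvars : ∀ w ∈ H.vars, C.IsParam w := by
    intro w hw
    rcases vars_prod_subset _ _ w hw with ⟨β, _, hwβ⟩
    exact hHbvars β w hwβ
  set rt : (∀ i : Fin k0, Fin (δf i)) → MvPolynomial (Fin n) K :=
    fun β => (∏ β' ∈ Finset.univ.erase β, Hb β') * ρ β with hrtdef
  have hrt_mem : ∀ β, H * (I * xB β) - rt β ∈ spanTL := by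
    intro β
    have hsplit : H = Hb β * ∏ β' ∈ Finset.univ.erase β, Hb β' :=
      (Finset.mul_prod_erase _ _ (Finset.mem_univ β)).symm
    have hrw : H * (I * xB β) - rt β =
        (∏ β' ∈ Finset.univ.erase β, Hb β') * (Hb β * (I * xB β) - ρ β) := by
      rw [hrtdef, hsplit]
      ring
    rw [hrw]
    exact Ideal.mul_mem_left _ _ (hHbmem β)
  have hrt_red : ∀ β, ∀ m ∈ (rt β).support, ∀ i, m (yv i) < δf i := by
    intro β m hm i
    rcases Finset.mem_add.mp (support_mul _ _ hm) with ⟨a, ha, b, hb, rfl⟩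
    have haw : a (yv i) = 0 := by
      apply supp_exp_eq_zero_of_not_mem_vars ha
      intro hmem
      rcases vars_prod_subset _ _ _ hmem with ⟨β', _, hwβ⟩
      exact hyv_np i (hHbvars β' _ hwβ)
    have hbw := hρred β b hb i
    simp only [Finsupp.add_apply]
    omega
  have hrt_vars : ∀ β, ∀ w ∈ (rt β).vars, C.IsParam w ∨ ∃ i, yv i = w := by
    intro β w hw
    by_contra hcon
    push_neg at hcon
    obtain ⟨hnp, hnyv⟩ := hcon
    obtain ⟨a, haC, ha1⟩ := hlv_elem w hnp
    have hwge : e.1 ≤ w := by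
      by_contra hwlt
      push_neg at hwlt
      have haTL : a ∈ TL := hTL_mem a haC (by rw [ha1]; exact hwlt)
      obtain ⟨t, hgt⟩ := List.mem_iff_get.mp haTL
      refine hnyv t ?_
      show (TL.get t).1 = w
      rw [hgt, ha1]
    rcases Finset.mem_union.mp (vars_mul _ _ hw) with h | h
    · rcases vars_prod_subset _ _ _ h with ⟨β', _, hwβ⟩
      exact hnp (hHbvars β' _ hwβ)
    · have hdeg := hρdeg β w (huntouched w hwge)
      have hdegIx : degreeOf w (I * xB β) = 0 := by
        have h1 : degreeOf w I = 0 := degreeOf_eq_zero_of_not_mem_vars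
          (fun hmem => absurd (hIvars_lt w hmem) (not_lt.mpr hwge))
        have h2 : degreeOf w (xB β) = 0 := by
          apply degreeOf_eq_zero_of_not_mem_vars
          intro hmem
          rcases (mem_vars w).mp hmem with ⟨m, hmsupp, hwm⟩
          have hms : m ∈ (monomial (monoOf yv δf β) (1:K)).support := hmsupp
          rw [support_monomial, if_neg one_ne_zero, Finset.mem_singleton] at hms
          subst hms
          exact Finsupp.mem_support_iff.mp hwm
            (monoOf_apply_notin
              (fun i hEq => absurd (hEq ▸ hyv_lt i) (not_lt.mpr hwge)) β)
        have h3 := degreeOf_mul_le w I (xB β)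
        omega
      have hzero : degreeOf w (ρ β) = 0 := by omega
      rcases (mem_vars w).mp h with ⟨m, hmsupp, hwm⟩
      have h4 := supp_exp_le_degreeOf hmsupp w
      have h5 := Finsupp.mem_support_iff.mp hwm
      omega
  -- the multiplication matrix
  set M : Matrix (∀ i : Fin k0, Fin (δf i)) (∀ i : Fin k0, Fin (δf i))
      (MvPolynomial (Fin n) K) := fun γ β => sliceL (lOf yv δf γ) (rt β) with hMdef
  have hrecon : ∀ β, rt β = ∑ γ : (∀ i : Fin k0, Fin (δf i)),
      M γ β * monomial (monoOf yv δf γ) 1 := fun β => recon hyinj (rt β) (hrt_red β)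
  have hMvars : ∀ γ β, ∀ w ∈ (M γ β).vars, C.IsParam w := by
    intro γ β w hw
    rcases (mem_vars w).mp hw with ⟨m, hmsupp, hwm⟩
    obtain ⟨hzero, how⟩ := supp_sliceL (lOf_nodup hyinj γ) hmsupp
    have hwm' := Finsupp.mem_support_iff.mp hwm
    have hwny : ∀ i, yv i ≠ w := by
      intro i hEq
      exact hwm' (hEq ▸ hzero (yv i, (γ i : ℕ))
        (by rw [lOf, List.mem_ofFn]; exact ⟨i, rfl⟩))
    have hnotin : w ∉ (lOf yv δf γ).map Prod.fst := by
      rw [lOf_map_fst, List.mem_ofFn]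
      rintro ⟨i, rfl⟩
      exact hwny i rfl
    have how_w : owList (lOf yv δf γ) m w = m w := owList_apply_notin hnotin m
    have hwvars : w ∈ (rt β).vars := (mem_vars w).mpr ⟨owList (lOf yv δf γ) m, how,
      by rw [Finsupp.mem_support_iff, how_w]; exact hwm'⟩
    rcases hrt_vars β w hwvars with h | ⟨i, hEq⟩
    · exact h
    · exact absurd hEq (hwny i)
  -- the final contradiction maker
  have FINAL : ∀ f ∈ Ideal.span G, f ≠ 0 →
      (∀ m ∈ f.support, (∀ w, e.1 < w → m w = 0) ∧ m e.1 ≤ d ∧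
        (∀ i : Fin k0, m (yv i) < δf i) ∧
        (m e.1 = d → ∀ w, ¬ C.IsParam w → w ≠ e.1 → m w = 0)) → False := by
    intro f hf hfne hsupp
    obtain ⟨g, hg, v, hgv, ev, hev, hev1, mg, mf, hmg, hmf, hdvd, hdegev⟩ :=
      gbdiv f hf hfne
    obtain ⟨h1, h2, h3, h4⟩ := hsupp mf hmf.1
    have hδev : 0 < degreeOf v ev.2 := by
      have h5 := degreeOf_pos_of_hasLV (C.hlv ev hev)
      rw [hev1] at h5
      exact h5
    rcases lt_trichotomy v e.1 with hvlt | hveq | hvgt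
    · -- v < e.1 : the element for v lies in the prefix
      have hevTL : ev ∈ TL := hTL_mem ev hev (by rw [hev1]; exact hvlt)
      obtain ⟨t, hgt⟩ := List.mem_iff_get.mp hevTL
      have hyvt : yv t = v := by
        show (TL.get t).1 = v
        rw [hgt, hev1]
      have hmf_t := h3 t
      have hδft : δf t = degreeOf v ev.2 := by
        show degreeOf (yv t) (cp t) = degreeOf v ev.2
        rw [hyvt]
        show degreeOf v (TL.get t).2 = degreeOf v ev.2
        rw [hgt]
      have hA : degreeOf v ev.2 ≤ mf v := le_trans hdegev (hdvd v)
      rw [hyvt] at hmf_t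
      rw [hδft] at hmf_t
      omega
    · -- v = e.1 : the main case
      have hevE : ev = e := C.fst_inj hev heC (by rw [hev1, hveq])
      have hdegev' : d ≤ mg e.1 := by
        have h5 := hdegev
        rw [hveq, hevE] at h5
        exact h5
      have hmgX : mg e.1 = d := by
        have hB := hdvd e.1
        omega
      have hmfX : mf e.1 = d := by
        have hB := hdvd e.1
        omega
      have hmgprof : ∀ w, ¬ C.IsParam w → w ≠ e.1 → mg w = 0 := by
        intro w hnp hne
        have h5 := h4 hmfX w hnp hne
        have h6 := hdvd w
        omega
      obtain ⟨mI, hmIsupp, hmIj⟩ := (mem_vars j).mp hjvars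
      obtain ⟨hmIX, hmImem⟩ := supp_initialWrt hmIsupp
      set m0 := mI.update e.1 d with hm0def
      have hm0supp : m0 ∈ e.2.support := hmImem
      have hjX : j ≠ e.1 := ne_of_lt hjlt
      have hm0j : m0 j ≠ 0 := by
        rw [hm0def, upd_other _ hjX]
        exact Finsupp.mem_support_iff.mp hmIj
      have hm0X : m0 e.1 = d := upd_self _ _ _
      obtain ⟨me, hme⟩ := exists_isLeadMon hFne
      have hlexme : lexLe m0 me := hme.2 m0 hm0supp
      have hgv' : HasLV g e.1 := by rw [← hveq]; exact hgv
      have hlexmg : lexLe me mg := (hC.1 e heC).2 g hg hgv' mg me hmg hme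
      have hlex2 : lexLe m0 mg := lexLe_trans hlexme hlexmg
      rcases hlex2 with hEq | ⟨i, hilt, hiag⟩
      · rw [hEq] at hm0j
        exact hm0j (hmgprof j hjnp hjX)
      · have hipos : mg i ≠ 0 := by omega
        by_cases hiparam : C.IsParam i
        · obtain ⟨aj, hajC, haj1⟩ := hlv_elem j hjnp
          have hij : i < j := by
            have h5 := hord i hiparam aj hajC
            rw [haj1] at h5
            exact h5
          exact hm0j (by rw [hiag j hij]; exact hmgprof j hjnp hjX)
        · by_cases hiX : i = e.1
          · rw [hiX, hm0X, hmgX] at hilt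
            exact lt_irrefl _ hilt
          · exact hipos (hmgprof i hiparam hiX)
    · -- v > e.1
      have h5 := h1 v hvgt
      have h6 := hdvd v
      omega
  -- support description for combinations  Σ w β * xB β  with param-only w β
  have suppdesc : ∀ (wf : (∀ i : Fin k0, Fin (δf i)) → MvPolynomial (Fin n) K),
      (∀ β, ∀ ww ∈ (wf β).vars, C.IsParam ww) →
      ∀ b' ∈ (∑ β, wf β * xB β).support,
        (∀ i, b' (yv i) < δf i) ∧
        (∀ ww, ¬ C.IsParam ww → (∀ i, yv i ≠ ww) → b' ww = 0) := by
    intro wf hwf b' hb'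
    have hbi := MvPolynomial.support_sum hb'
    rw [Finset.mem_biUnion] at hbi
    obtain ⟨β, _, hbβ⟩ := hbi
    rcases Finset.mem_add.mp (support_mul _ _ hbβ) with ⟨bw, hbw, bm, hbm, rfl⟩
    have hbm' : bm ∈ (monomial (monoOf yv δf β) (1:K)).support := hbm
    rw [support_monomial, if_neg one_ne_zero, Finset.mem_singleton] at hbm'
    subst hbm'
    constructor
    · intro i
      have h1 : bw (yv i) = 0 := supp_exp_eq_zero_of_not_mem_vars hbw
        (fun hmem => hyv_np i (hwf β _ hmem))
      have h2 : monoOf yv δf β (yv i) = (β i : ℕ) := monoOf_apply_y hyinj β i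
      have h3 : (β i : ℕ) < δf i := (β i).2
      simp only [Finsupp.add_apply]
      omega
    · intro ww hnp hnyv
      have h1 : bw ww = 0 := supp_exp_eq_zero_of_not_mem_vars hbw
        (fun hmem => hnp (hwf β _ hmem))
      have h2 : monoOf yv δf β ww = 0 := monoOf_apply_notin hnyv β
      simp only [Finsupp.add_apply, h1, h2]
  -- supp analysis for  H' * (Σ w β * xB β)  with param-only H'
  have suppHr : ∀ (H' : MvPolynomial (Fin n) K)
      (wf : (∀ i : Fin k0, Fin (δf i)) → MvPolynomial (Fin n) K),
      (∀ ww ∈ H'.vars, C.IsParam ww) →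
      (∀ β, ∀ ww ∈ (wf β).vars, C.IsParam ww) →
      ∀ m ∈ (H' * ∑ β, wf β * xB β).support,
        (∀ w, e.1 < w → m w = 0) ∧ m e.1 ≤ d ∧
        (∀ i : Fin k0, m (yv i) < δf i) ∧
        (m e.1 = d → ∀ w, ¬ C.IsParam w → w ≠ e.1 → m w = 0) := by
    intro H' wf hH' hwf m hm
    rcases Finset.mem_add.mp (support_mul _ _ hm) with ⟨a, ha, b, hb, rfl⟩
    obtain ⟨hb1, hb2⟩ := suppdesc wf hwf b hb
    have hanp : ∀ ww, ¬ C.IsParam ww → a ww = 0 := fun ww hnp =>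
      supp_exp_eq_zero_of_not_mem_vars ha (fun hmem => hnp (hH' _ hmem))
    have hXnp : ¬ C.IsParam e.1 := fun hp => absurd (hparam_lt _ hp) (lt_irrefl _)
    have hXe : (a + b) e.1 = 0 := by
      have h1 := hanp e.1 hXnp
      have h2 := hb2 e.1 hXnp (fun i => ne_of_lt (hyv_lt i))
      simp only [Finsupp.add_apply, h1, h2]
    refine ⟨?_, ?_, ?_, ?_⟩
    · intro w hw
      have hwnp : ¬ C.IsParam w := fun hp => absurd (hparam_lt _ hp)
        (not_lt.mpr (le_of_lt hw))
      have h1 := hanp w hwnp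
      have h2 := hb2 w hwnp (fun i hEq => absurd (hEq ▸ hyv_lt i) (not_lt.mpr (le_of_lt hw)))
      simp only [Finsupp.add_apply, h1, h2]
    · rw [hXe]
      omega
    · intro i
      have h1 : a (yv i) = 0 := hanp (yv i) (hyv_np i)
      have h2 := hb1 i
      simp only [Finsupp.add_apply, h1]
      omega
    · intro hEq
      rw [hXe] at hEq
      omega
  -- split the product of initials at I
  obtain ⟨Ai, Bi, hABi⟩ : ∃ Ai Bi : MvPolynomial (Fin n) K, C.prodInit = Ai * (I * Bi) := by
    have hmemI : I ∈ C.elems.map (fun a => initialWrt a.1 a.2) :=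
      List.mem_map.mpr ⟨e, heC, rfl⟩
    obtain ⟨l1, l2, hl⟩ := List.append_of_mem hmemI
    refine ⟨l1.prod, l2.prod, ?_⟩
    rw [TriSet.prodInit, hl, List.prod_append, List.prod_cons]
  by_cases hdet : M.det = 0
  · -- zero-divisor case
    obtain ⟨vker, hvne, hvker⟩ := Matrix.exists_mulVec_eq_zero_iff.mpr hdet
    obtain ⟨β₀, hβ₀⟩ := Function.ne_iff.mp hvne
    have hβ₀' : vker β₀ ≠ 0 := hβ₀
    obtain ⟨m₀, hm₀⟩ := MvPolynomial.ne_zero_iff.mp hβ₀'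
    set lf : List (Fin n × ℕ) := C.elems.map (fun a => (a.1, m₀ a.1)) with hlfdef
    set lz : List (Fin n × ℕ) := C.elems.map (fun a => (a.1, (0:ℕ))) with hlzdef
    have hCfst_nodup : (C.elems.map Prod.fst).Nodup := by
      have hp : List.Pairwise (· < ·) (C.elems.map Prod.fst) :=
        List.pairwise_map.mpr C.sorted
      exact hp.imp ne_of_lt
    have hlf_fst : lf.map Prod.fst = C.elems.map Prod.fst := by
      rw [hlfdef, List.map_map]
      rfl
    have hlz_fst : lz.map Prod.fst = C.elems.map Prod.fst := by
      rw [hlzdef, List.map_map]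
      rfl
    have hlf_nodup : (lf.map Prod.fst).Nodup := by rw [hlf_fst]; exact hCfst_nodup
    have hlz_nodup : (lz.map Prod.fst).Nodup := by rw [hlz_fst]; exact hCfst_nodup
    set wk : (∀ i : Fin k0, Fin (δf i)) → MvPolynomial (Fin n) K :=
      fun β => sliceL lf (vker β) with hwkdef
    set m₁ := owList lz m₀ with hm₁def
    have hm₁lv : ∀ a ∈ C.elems, m₁ a.1 = 0 := by
      intro a ha
      exact owList_apply_mem hlz_nodup (List.mem_map.mpr ⟨a, ha, rfl⟩) m₀
    have hm₁not : ∀ w : Fin n, (∀ a ∈ C.elems, a.1 ≠ w) → m₁ w = m₀ w := by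
      intro w hw
      apply owList_apply_notin
      rw [hlz_fst, List.mem_map]
      rintro ⟨a, ha, rfl⟩
      exact hw a ha rfl
    have hcoef : coeff m₁ (wk β₀) = coeff m₀ (vker β₀) := by
      rw [hwkdef, sliceL_coeff hlf_nodup, if_pos]
      · congr 1
        ext wj
        by_cases hwj : ∃ a ∈ C.elems, a.1 = wj
        · obtain ⟨a, ha, rfl⟩ := hwj
          exact owList_apply_mem hlf_nodup (List.mem_map.mpr ⟨a, ha, rfl⟩) m₁
        · push_neg at hwj
          rw [owList_apply_notin (by
            rw [hlf_fst, List.mem_map]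
            rintro ⟨a, ha, rfl⟩
            exact hwj a ha rfl) m₁]
          exact hm₁not wj hwj
      · rintro yd hyd
        rw [hlfdef, List.mem_map] at hyd
        obtain ⟨a, ha, rfl⟩ := hyd
        exact hm₁lv a ha
    have hwkβ₀ : wk β₀ ≠ 0 := by
      intro h0
      rw [h0, coeff_zero] at hcoef
      exact hm₀ hcoef.symm
    have hwk_param : ∀ β, ∀ ww ∈ (wk β).vars, C.IsParam ww := by
      intro β ww hww
      rcases (mem_vars ww).mp hww with ⟨m, hmsupp, hwm⟩
      obtain ⟨hzero, _⟩ := supp_sliceL hlf_nodup hmsupp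
      by_contra hnp
      obtain ⟨a, haC, ha1⟩ := hlv_elem ww hnp
      have hmz : m ww = 0 := by
        have := hzero (a.1, m₀ a.1) (List.mem_map.mpr ⟨a, haC, rfl⟩)
        rwa [ha1] at this
      exact Finsupp.mem_support_iff.mp hwm hmz
    have hwker : ∀ γ, ∑ β, M γ β * wk β = 0 := by
      intro γ
      have hslice : ∀ β, M γ β * wk β = sliceL lf (M γ β * vker β) := by
        intro β
        rw [hwkdef]
        symm
        apply sliceL_mul_varfree
        intro yd hyd hmemv
        rw [hlfdef, List.mem_map] at hyd
        obtain ⟨a, ha, rfl⟩ := hyd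
        have : C.IsParam a.1 := hMvars γ β a.1 hmemv
        exact this (List.mem_map.mpr ⟨a, ha, rfl⟩)
      calc ∑ β, M γ β * wk β = ∑ β, sliceL lf (M γ β * vker β) :=
            Finset.sum_congr rfl (fun β _ => hslice β)
        _ = sliceL lf (∑ β, M γ β * vker β) := (sliceL_sum _ _ _).symm
        _ = sliceL lf 0 := by
            congr 1
            have := congrFun hvker γ
            simpa [Matrix.mulVec, dotProduct] using this
        _ = 0 := sliceL_zero _
    set r := ∑ β, wk β * xB β with hrdef
    have hrne : r ≠ 0 := by
      intro h0
      have hself : monoOf yv δf β₀ ≤ m₁ + monoOf yv δf β₀ := by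
        rw [Finsupp.le_def]
        intro jj
        simp only [Finsupp.add_apply]
        omega
      have hc : coeff (m₁ + monoOf yv δf β₀) r = coeff m₁ (wk β₀) := by
        rw [hrdef, coeff_sum]
        rw [Finset.sum_eq_single β₀]
        · rw [hxBdef]
          rw [coeff_mul_monomial', if_pos hself, add_tsub_cancel_right, mul_one]
        · intro β _ hβne
          rw [hxBdef, coeff_mul_monomial']
          by_cases hble : monoOf yv δf β ≤ m₁ + monoOf yv δf β₀
          · rw [if_pos hble, mul_one]
            by_contra hc0
            have hmem := mem_support_iff.mpr hc0
            obtain ⟨hzero, _⟩ := supp_sliceL hlf_nodup hmem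
            apply hβne
            funext i
            apply Fin.ext
            have h1 : (m₁ + monoOf yv δf β₀ - monoOf yv δf β) (yv i) = 0 := by
              have := hzero ((yv i), m₀ (yv i))
                (List.mem_map.mpr ⟨TL.get i, hTLsub _ (hTLget_mem i), rfl⟩)
              exact this
            have h2 : monoOf yv δf β (yv i) ≤ (m₁ + monoOf yv δf β₀) (yv i) :=
              Finsupp.le_def.mp hble (yv i)
            rw [Finsupp.tsub_apply] at h1
            simp only [Finsupp.add_apply] at h1 h2
            rw [monoOf_apply_y hyinj, monoOf_apply_y hyinj] at h1 h2
            have h3 : m₁ (yv i) = 0 := hm₁lv (TL.get i) (hTLsub _ (hTLget_mem i))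
            rw [h3] at h1 h2
            omega
          · rw [if_neg hble]
        · intro h
          exact absurd (Finset.mem_univ _) h
      rw [h0, coeff_zero] at hc
      exact hm₀ (by rw [← hcoef]; exact hc.symm)
    have hHIr : H * I * r ∈ spanTL := by
      have hExp : H * I * r - ∑ β, wk β * rt β ∈ spanTL := by
        have hrw : H * I * r - ∑ β, wk β * rt β
            = ∑ β, (wk β * (H * (I * xB β)) - wk β * rt β) := by
          rw [hrdef, Finset.mul_sum, ← Finset.sum_sub_distrib]
          congr 1
          funext β
          ring
        rw [hrw]
        apply Ideal.sum_mem
        intro β _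
        have h5 : wk β * (H * (I * xB β)) - wk β * rt β
            = wk β * (H * (I * xB β) - rt β) := by ring
        rw [h5]
        exact Ideal.mul_mem_left _ _ (hrt_mem β)
      have hzero2 : ∑ β, wk β * rt β = 0 := by
        have h6 : ∀ β, wk β * rt β = ∑ γ, (M γ β * wk β) * xB γ := by
          intro β
          rw [hrecon β, Finset.mul_sum]
          congr 1
          funext γ
          rw [hxBdef]
          ring
        calc ∑ β, wk β * rt β = ∑ β, ∑ γ, (M γ β * wk β) * xB γ :=
              Finset.sum_congr rfl (fun β _ => h6 β)
          _ = ∑ γ, ∑ β, (M γ β * wk β) * xB γ := Finset.sum_comm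
          _ = ∑ γ, (∑ β, M γ β * wk β) * xB γ := by
              congr 1
              funext γ
              rw [Finset.sum_mul]
          _ = 0 := by
              apply Finset.sum_eq_zero
              intro γ _
              rw [hwker γ, zero_mul]
      have h7 := hExp
      rwa [hzero2, sub_zero] at h7
    have hHrJ : H * r ∈ Ideal.span G := by
      apply hsatJ
      refine ⟨1, ?_⟩
      rw [pow_one, hABi]
      have h8 : Ai * (I * Bi) * (H * r) = (Ai * Bi) * (H * I * r) := by ring
      rw [h8]
      exact Ideal.mul_mem_left _ _ (hspanTL_C hHIr)
    exact FINAL (H * r) hHrJ (mul_ne_zero hHne hrne)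
      (by rw [hrdef]; exact suppHr H wk hHvars hwk_param)
  · -- unit case: the initial is invertible modulo the prefix
    set Pset : Set (Fin n) := {w | C.IsParam w} with hPdef
    have hMmem : ∀ γ β, M γ β ∈ MvPolynomial.supported K Pset := by
      intro γ β
      rw [mem_supported]
      intro w hw
      exact hMvars γ β w (Finset.mem_coe.mp hw)
    set M' : Matrix (∀ i : Fin k0, Fin (δf i)) (∀ i : Fin k0, Fin (δf i))
        (MvPolynomial.supported K Pset) := fun γ β => ⟨M γ β, hMmem γ β⟩ with hM'def
    have hdetval : ((M'.det : MvPolynomial.supported K Pset) : MvPolynomial (Fin n) K)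
        = M.det := by
      have h1 : ((MvPolynomial.supported K Pset).val.toRingHom) M'.det
          = (((MvPolynomial.supported K Pset).val.toRingHom).mapMatrix M').det :=
        RingHom.map_det _ _
      have h2 : ((MvPolynomial.supported K Pset).val.toRingHom).mapMatrix M' = M := by
        ext γ β
        rfl
      rw [← h2]
      exact h1
    have hdv : ((M'.det : MvPolynomial.supported K Pset) : MvPolynomial (Fin n) K) ≠ 0 := by
      rw [hdetval]
      exact hdet
    set detP : MvPolynomial (Fin n) K := ((M'.det : MvPolynomial.supported K Pset) :
      MvPolynomial (Fin n) K) with hdetPdef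
    have hdetvars : ∀ w ∈ detP.vars, C.IsParam w := by
      intro w hw
      exact (mem_supported.mp M'.det.2) (Finset.mem_coe.mpr hw)
    set γ₀ : (∀ i : Fin k0, Fin (δf i)) := fun i => ⟨0, hδpos i⟩ with hγ₀def
    set adjc : (∀ i : Fin k0, Fin (δf i)) → MvPolynomial (Fin n) K :=
      fun β => ((M'.adjugate β γ₀ : MvPolynomial.supported K Pset) :
        MvPolynomial (Fin n) K) with hadjdef
    have hadjvars : ∀ β, ∀ w ∈ (adjc β).vars, C.IsParam w := by
      intro β w hw
      exact (mem_supported.mp (M'.adjugate β γ₀).2) (Finset.mem_coe.mpr hw)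
    have hmul_adj : ∀ γ, ∑ β, M γ β * adjc β = if γ = γ₀ then detP else 0 := by
      intro γ
      have h0 : (M' * M'.adjugate) γ γ₀
          = (M'.det • (1 : Matrix _ _ (MvPolynomial.supported K Pset))) γ γ₀ := by
        rw [Matrix.mul_adjugate]
      have h1 : (((M' * M'.adjugate) γ γ₀ : MvPolynomial.supported K Pset) :
          MvPolynomial (Fin n) K) = ∑ β, M γ β * adjc β := by
        rw [Matrix.mul_apply, AddSubmonoidClass.coe_finset_sum]
        apply Finset.sum_congr rfl
        intro β _
        rfl
      have h2 : (((M'.det • (1 : Matrix _ _ (MvPolynomial.supported K Pset))) γ γ₀ :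
          MvPolynomial.supported K Pset) : MvPolynomial (Fin n) K)
          = if γ = γ₀ then detP else 0 := by
        rw [Matrix.smul_apply, Matrix.one_apply]
        by_cases hγ : γ = γ₀
        · rw [if_pos hγ, if_pos hγ, smul_eq_mul, mul_one]
        · rw [if_neg hγ, if_neg hγ, smul_zero]
          rfl
      rw [← h1, h0, h2]
    set r1 := ∑ β, adjc β * xB β with hr1def
    have hγ₀mono : monoOf yv δf γ₀ = 0 := by
      ext jj
      by_cases hjj : ∃ i, yv i = jj
      · obtain ⟨i, rfl⟩ := hjj
        rw [monoOf_apply_y hyinj]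
        rfl
      · push_neg at hjj
        rw [monoOf_apply_notin hjj]
        rfl
    have hxγ₀ : xB γ₀ = 1 := by
      show monomial (monoOf yv δf γ₀) (1:K) = 1
      rw [hγ₀mono]
      simp [MvPolynomial.monomial_zero']
    have hkey : H * I * r1 - detP ∈ spanTL := by
      have hstep1 : H * I * r1 - ∑ β, adjc β * rt β ∈ spanTL := by
        have hrw : H * I * r1 - ∑ β, adjc β * rt β
            = ∑ β, (adjc β * (H * (I * xB β)) - adjc β * rt β) := by
          rw [hr1def, Finset.mul_sum, ← Finset.sum_sub_distrib]
          congr 1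
          funext β
          ring
        rw [hrw]
        apply Ideal.sum_mem
        intro β _
        have h5 : adjc β * (H * (I * xB β)) - adjc β * rt β
            = adjc β * (H * (I * xB β) - rt β) := by ring
        rw [h5]
        exact Ideal.mul_mem_left _ _ (hrt_mem β)
      have hstep2 : ∑ β, adjc β * rt β = detP := by
        have h6 : ∀ β, adjc β * rt β = ∑ γ, (M γ β * adjc β) * xB γ := by
          intro β
          rw [hrecon β, Finset.mul_sum]
          congr 1
          funext γ
          ring
        calc ∑ β, adjc β * rt β = ∑ β, ∑ γ, (M γ β * adjc β) * xB γ :=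
              Finset.sum_congr rfl (fun β _ => h6 β)
          _ = ∑ γ, ∑ β, (M γ β * adjc β) * xB γ := Finset.sum_comm
          _ = ∑ γ, (∑ β, M γ β * adjc β) * xB γ := by
              apply Finset.sum_congr rfl
              intro γ _
              rw [Finset.sum_mul]
          _ = ∑ γ, (if γ = γ₀ then detP else 0) * xB γ := by
              apply Finset.sum_congr rfl
              intro γ _
              rw [hmul_adj γ]
          _ = detP := by
              have hsw : ∀ γ, (if γ = γ₀ then detP else 0) * xB γ
                  = if γ = γ₀ then detP * xB γ else 0 := by
                intro γ
                split <;> simp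
              rw [Finset.sum_congr rfl (fun γ _ => hsw γ),
                Finset.sum_ite_eq' Finset.univ γ₀ (fun γ => detP * xB γ),
                if_pos (Finset.mem_univ _), hxγ₀, mul_one]
      have h7 := hstep1
      rwa [hstep2] at h7
    -- the reductum E of the counterexample element
    set E := e.2 - I * monomial (Finsupp.single e.1 d) 1 with hEdef
    have hEsupp : ∀ m ∈ E.support, m e.1 < d := supp_reductum hd1
    obtain ⟨h₂, r₂, hh₂ne, hh₂vars, hh₂mem, hh₂red, hh₂deg⟩ := reduce (H * r1 * E)
    have hXnp : ¬ C.IsParam e.1 := fun hp => absurd (hparam_lt _ hp) (lt_irrefl _)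
    have hr1vars : ∀ w, e.1 ≤ w → w ∉ r1.vars := by
      intro w hw hmem
      rcases (mem_vars w).mp hmem with ⟨m, hmsupp, hwm⟩
      have hsd := suppdesc adjc hadjvars m (by rw [← hr1def]; exact hmsupp)
      have hwnp : ¬ C.IsParam w := fun hp => absurd (hparam_lt _ hp) (not_lt.mpr hw)
      have h1 := hsd.2 w hwnp (fun i hEq => absurd (hEq ▸ hyv_lt i) (not_lt.mpr hw))
      exact Finsupp.mem_support_iff.mp hwm h1
    have hHfree : ∀ w, e.1 ≤ w → degreeOf w H = 0 := fun w hw =>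
      degreeOf_eq_zero_of_not_mem_vars (fun hmem =>
        absurd (hparam_lt _ (hHvars _ hmem)) (not_lt.mpr hw))
    have hEfree : ∀ w, e.1 < w → degreeOf w E = 0 := by
      intro w hw
      apply degreeOf_eq_zero_of_not_mem_vars
      intro hmem
      rcases (mem_vars w).mp hmem with ⟨m, hmsupp, hwm⟩
      have hsub := MvPolynomial.support_sub _ _ _ hmsupp
      have hwz : m w = 0 := by
        rcases Finset.mem_union.mp hsub with h | h
        · apply supp_exp_eq_zero_of_not_mem_vars h
          intro hv
          exact absurd (hHasLV.2 w hv) (not_le.mpr hw)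
        · rcases Finset.mem_add.mp (support_mul _ _ h) with ⟨a, ha, b, hb, rfl⟩
          have hb' : b ∈ (monomial (Finsupp.single e.1 d) (1:K)).support := hb
          rw [support_monomial, if_neg one_ne_zero, Finset.mem_singleton] at hb'
          subst hb'
          have h1 : a w = 0 := supp_exp_eq_zero_of_not_mem_vars ha
            (fun hv => absurd (hIvars_lt w hv) (not_lt.mpr (le_of_lt hw)))
          simp only [Finsupp.add_apply, h1,
            Finsupp.single_eq_of_ne' (ne_of_lt hw)]
          rfl
      exact Finsupp.mem_support_iff.mp hwm hwz
    have hdegHrE_X : degreeOf e.1 (H * r1 * E) ≤ d - 1 := by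
      have h1 := degreeOf_mul_le e.1 (H * r1) E
      have h2 := degreeOf_mul_le e.1 H r1
      have h3 : degreeOf e.1 H = 0 := hHfree e.1 le_rfl
      have h4 : degreeOf e.1 r1 = 0 :=
        degreeOf_eq_zero_of_not_mem_vars (hr1vars e.1 le_rfl)
      have h5 : degreeOf e.1 E ≤ d - 1 := by
        rw [degreeOf_le_iff]
        intro m hm
        have := hEsupp m hm
        omega
      omega
    have hr₂X : ∀ m ∈ r₂.support, m e.1 < d := by
      have hdeg := hh₂deg e.1 (huntouched e.1 le_rfl)
      intro m hm
      have h1 := supp_exp_le_degreeOf hm e.1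
      omega
    have hr₂hi : ∀ w, e.1 < w → ∀ m ∈ r₂.support, m w = 0 := by
      intro w hw
      have hdegw := hh₂deg w (huntouched w (le_of_lt hw))
      have h0 : degreeOf w (H * r1 * E) = 0 := by
        have h1 := degreeOf_mul_le w (H * r1) E
        have h2 := degreeOf_mul_le w H r1
        have h3 : degreeOf w H = 0 := hHfree w (le_of_lt hw)
        have h4 : degreeOf w r1 = 0 :=
          degreeOf_eq_zero_of_not_mem_vars (hr1vars w (le_of_lt hw))
        have h5 := hEfree w hw
        omega
      intro m hm
      have := supp_exp_le_degreeOf hm w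
      omega
    -- the contradiction polynomial
    set f := h₂ * detP * monomial (Finsupp.single e.1 d) 1 + r₂ with hfdef
    have hfJ : f ∈ Ideal.span G := by
      have hid : f = (h₂ * H * r1) * e.2
          - h₂ * ((H * I * r1 - detP) * monomial (Finsupp.single e.1 d) 1)
          - (h₂ * (H * r1 * E) - r₂) := by
        rw [hfdef, hEdef]
        ring
      rw [hid]
      apply Ideal.sub_mem
      · apply Ideal.sub_mem
        · exact Ideal.mul_mem_left _ _ (Ideal.subset_span heG)
        · exact hspanTL_J (Ideal.mul_mem_left _ _ (Ideal.mul_mem_right _ _ hkey))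
      · exact hspanTL_J hh₂mem
    have hfne : f ≠ 0 := by
      have hcw : coeffWrt e.1 d f = h₂ * detP := by
        rw [hfdef, coeffWrt_add]
        have h1 : coeffWrt e.1 d (h₂ * detP * monomial (Finsupp.single e.1 d) 1)
            = h₂ * detP := by
          rw [coeffWrt_monomial_shift le_rfl, Nat.sub_self]
          apply coeffWrt_zero_varfree
          intro hmem
          rcases Finset.mem_union.mp (vars_mul _ _ hmem) with h | h
          · exact hXnp (hh₂vars _ h)
          · exact hXnp (hdetvars _ h)
        have h2 : coeffWrt e.1 d r₂ = 0 := coeffWrt_eq_zero_of_lt hr₂X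
        rw [h1, h2, add_zero]
      intro h0
      rw [h0, coeffWrt_zero] at hcw
      exact (mul_ne_zero hh₂ne hdv) hcw.symm
    apply FINAL f hfJ hfne
    intro m hm
    rcases Finset.mem_union.mp (MvPolynomial.support_add hm) with hm1 | hm2
    · rcases Finset.mem_add.mp (support_mul _ _ hm1) with ⟨a, ha, b, hb, rfl⟩
      have hb' : b ∈ (monomial (Finsupp.single e.1 d) (1:K)).support := hb
      rw [support_monomial, if_neg one_ne_zero, Finset.mem_singleton] at hb'
      subst hb'
      have haparam : ∀ w, ¬ C.IsParam w → a w = 0 := fun w hnp =>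
        supp_exp_eq_zero_of_not_mem_vars ha (fun hmem => by
          rcases Finset.mem_union.mp (vars_mul _ _ hmem) with h | h
          · exact hnp (hh₂vars _ h)
          · exact hnp (hdetvars _ h))
      have haX : a e.1 = 0 := haparam e.1 hXnp
      refine ⟨?_, ?_, ?_, ?_⟩
      · intro w hw
        have hwnp : ¬ C.IsParam w := fun hp => absurd (hparam_lt _ hp)
          (not_lt.mpr (le_of_lt hw))
        have h1 := haparam w hwnp
        simp only [Finsupp.add_apply, h1,
          Finsupp.single_eq_of_ne' (ne_of_lt hw), Nat.add_zero]
      · simp only [Finsupp.add_apply, haX, Finsupp.single_eq_same]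
        omega
      · intro i
        have h1 : a (yv i) = 0 := haparam (yv i) (hyv_np i)
        have h2 : Finsupp.single e.1 d (yv i) = 0 :=
          Finsupp.single_eq_of_ne' (ne_of_gt (hyv_lt i))
        simp only [Finsupp.add_apply, h1, h2]
        exact hδpos i
      · intro _ w hnp hne
        have h1 := haparam w hnp
        simp only [Finsupp.add_apply, h1,
          Finsupp.single_eq_of_ne' (Ne.symm hne), Nat.add_zero]
    · refine ⟨fun w hw => hr₂hi w hw m hm2, le_of_lt (hr₂X m hm2),
        hh₂red m hm2, ?_⟩
      intro hEq
      have := hr₂X m hm2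
      omega
end

section
/- Let Ψ = {(G_1, C_1), ..., (G_t, C_t)} be a characteristic decomposition of a finite polynomial set F ⊆ K[x_1,...,x_n] and assume sat(C_i) = ⟨C_i⟩ for every i. Then the radical of ⟨F⟩ equals the intersection of the radicals of ⟨G_i⟩ over i = 1,...,t. -/
open MvPolynomial

open CharDec MvPolynomial


section AuxNSS

open MvPolynomial

/-- Contraction of the extension of an ideal of `K[x]` to `L[x]` for a field
extension `L/K`: if `map (algebraMap K L) q` lies in the extended ideal, then
`q` lies in the original ideal. Proved using a `K`-linear retraction `L → K`
applied coefficientwise. -/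
theorem aux_comap_map {K L : Type*} [Field K] [Field L] [Algebra K L] {σ : Type*}
    {I : Ideal (MvPolynomial σ K)} {q : MvPolynomial σ K}
    (h : MvPolynomial.map (algebraMap K L) q ∈
      Ideal.map (MvPolynomial.map (algebraMap K L)) I) : q ∈ I := by
  classical
  obtain ⟨s, hs⟩ := (Algebra.linearMap K L).exists_leftInverse_of_injective
    (LinearMap.ker_eq_bot.mpr (algebraMap K L).injective)
  have hs1 : ∀ c : K, s (algebraMap K L c) = c := fun c => LinearMap.congr_fun hs c
  set φ : MvPolynomial σ K →+* MvPolynomial σ L :=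
    MvPolynomial.map (algebraMap K L) with hφdef
  let Sf : MvPolynomial σ L → MvPolynomial σ K := fun f =>
    ∑ m ∈ f.support, monomial m (s (f.coeff m))
  have hcoeff : ∀ (f : MvPolynomial σ L) m, (Sf f).coeff m = s (f.coeff m) := by
    intro f m
    simp only [Sf, coeff_sum, coeff_monomial]
    rw [Finset.sum_ite_eq' f.support m fun m' => s (f.coeff m')]
    by_cases hm : m ∈ f.support
    · simp [hm]
    · simp [hm, notMem_support_iff.mp hm]
  have hmul : ∀ (g : MvPolynomial σ K) (f : MvPolynomial σ L), Sf (φ g * f) = g * Sf f := by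
    intro g f
    ext m
    rw [hcoeff, coeff_mul, coeff_mul, map_sum]
    refine Finset.sum_congr rfl fun ab _ => ?_
    rw [hcoeff, hφdef, coeff_map, ← Algebra.smul_def, map_smul, smul_eq_mul]
  have hid : ∀ g : MvPolynomial σ K, Sf (φ g) = g := by
    intro g
    ext m
    rw [hcoeff, hφdef, coeff_map, hs1]
  have hSsum : ∀ (T : Finset (MvPolynomial σ L)) (F : MvPolynomial σ L → MvPolynomial σ L),
      Sf (∑ g ∈ T, F g) = ∑ g ∈ T, Sf (F g) := by
    intro T F
    ext m
    rw [hcoeff, coeff_sum, map_sum, coeff_sum]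
    exact Finset.sum_congr rfl fun g _ => (hcoeff (F g) m).symm
  have h' : φ q ∈ Submodule.span (MvPolynomial σ L) (φ '' ↑I) := h
  obtain ⟨c, hsupp, hsum⟩ := Submodule.mem_span_set.mp h'
  have hq : q = ∑ g ∈ c.support, Sf (c g • g) := by
    calc q = Sf (φ q) := (hid q).symm
    _ = Sf (∑ g ∈ c.support, c g • g) := by rw [← hsum]; rfl
    _ = ∑ g ∈ c.support, Sf (c g • g) := hSsum _ _
  rw [hq]
  refine Ideal.sum_mem _ fun g hg => ?_
  obtain ⟨g₀, hg₀I, rfl⟩ := hsupp hg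
  rw [smul_eq_mul, mul_comm, hmul]
  exact Ideal.mul_mem_right _ _ hg₀I

/-- Over the algebraic closure, the radical of `⟨S⟩` consists exactly of the
polynomials vanishing on the zero set of `S`. -/
theorem aux_radical_eq_zeroSet {K : Type*} [Field K] {n : ℕ}
    (S : Set (MvPolynomial (Fin n) K)) (p : MvPolynomial (Fin n) K) :
    p ∈ (Ideal.span S).radical ↔ ∀ x ∈ CharDec.zeroSet S, aeval x p = 0 := by
  constructor
  · rintro ⟨k, hk⟩ x hx
    have hvan : Ideal.span S ≤ RingHom.ker (aeval (R := K) x) :=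
      Ideal.span_le.mpr fun f hf => hx f hf
    have hk0 : (aeval x) (p ^ k) = 0 := hvan hk
    rw [map_pow] at hk0
    rcases Nat.eq_zero_or_pos k with hk' | hk'
    · subst hk'
      simp only [pow_zero] at hk0
      exact absurd hk0 one_ne_zero
    · exact pow_eq_zero_iff hk'.ne' |>.mp hk0
  · intro hp
    set A := AlgebraicClosure K
    set φ : MvPolynomial (Fin n) K →+* MvPolynomial (Fin n) A :=
      MvPolynomial.map (algebraMap K A) with hφdef
    have h1 : φ p ∈ MvPolynomial.vanishingIdeal A
        (MvPolynomial.zeroLocus A (Ideal.map φ (Ideal.span S))) := by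
      rw [MvPolynomial.mem_vanishingIdeal_iff]
      intro x hx
      have hx' : x ∈ CharDec.zeroSet S := by
        intro g hg
        have := hx (φ g) (Ideal.mem_map_of_mem φ (Ideal.subset_span hg))
        rwa [hφdef, MvPolynomial.aeval_map_algebraMap] at this
      have h2 := hp x hx'
      rwa [hφdef, MvPolynomial.aeval_map_algebraMap]
    rw [MvPolynomial.vanishingIdeal_zeroLocus_eq_radical] at h1
    obtain ⟨k, hk⟩ := h1
    refine ⟨k, ?_⟩
    have h3 : φ (p ^ k) ∈ Ideal.map φ (Ideal.span S) := by rwa [map_pow]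
    exact aux_comap_map h3

end AuxNSS

/-- Let `{(G_1, C_1), …, (G_t, C_t)}` be a characteristic
decomposition of a finite polynomial set `F` with `sat(C_i) = ⟨C_i⟩` for every
`i`. Then `√⟨F⟩ = ⋂ i, √⟨G_i⟩`. -/
theorem stmt_18 {K : Type*} [Field K] {n : ℕ}
    (F : Set (MvPolynomial (Fin n) K)) (hF : F.Finite)
    (t : ℕ) (G : Fin t → Set (MvPolynomial (Fin n) K))
    (C : Fin t → TriSet K (Fin n))
    (hpair : ∀ i, IsReducedGB (G i) (Ideal.span (G i)) ∧
      IsWCharOf (C i) (G i) ∧ (C i).Normal)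
    (hz1 : zeroSet F = ⋃ i, zeroSet (G i))
    (hz2 : zeroSet F = ⋃ i, (C i).zeroQuasi)
    (hz3 : zeroSet F = ⋃ i, zeroSet ((C i).sat : Set (MvPolynomial (Fin n) K)))
    (hsat : ∀ i, (C i).sat = (C i).ideal) :
    (Ideal.span F).radical = ⨅ i, (Ideal.span (G i)).radical := by
  ext p
  rw [Ideal.mem_iInf, aux_radical_eq_zeroSet F p, hz1]
  constructor
  · intro h i
    rw [aux_radical_eq_zeroSet]
    intro x hx
    exact h x (Set.mem_iUnion.mpr ⟨i, hx⟩)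
  · intro h x hx
    obtain ⟨i, hxi⟩ := Set.mem_iUnion.mp hx
    exact (aux_radical_eq_zeroSet _ p).mp (h i) x hxi
end
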